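/- arXiv:2410.03388 — 3 statements merged into one kernel-verified Lean document; each statement's English description precedes it below -/
import Mathlib

section
/- Let K_1, K_2 be fractal k-cubes of order n with digit sets D_1, D_2, and let α ∈ A_k be nonzero with α ≻ 0. Suppose #G_0 = #G_α = l ≥ 1 and #G_β ≤ l for every β ≻ 0, and set s = log_n l. Then the s-dimensional Hausdorff measure H^s(F_0) of F_0 = K_1 ∩ K_2 is infinite. -/
open Set Pointwise MeasureTheory
open scoped ENNReal NNReal

noncomputable section

/-- Points of `ℝ^k`. -/
abbrev Pt (k : ℕ) := Fin k → ℝ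

/-- A vector with all coordinates in `{0, 1, …, n−1}`. -/
def IsDigit (n : ℕ) {k : ℕ} (d : Pt k) : Prop :=
  ∀ i, ∃ m : ℕ, m < n ∧ d i = (m : ℝ)

/-- A digit set: a nonempty subset of `{0, 1, …, n−1}^k`. -/
def IsDigitSet (n : ℕ) {k : ℕ} (D : Set (Pt k)) : Prop :=
  D.Nonempty ∧ ∀ d ∈ D, IsDigit n d

/-- `K` is the fractal `k`-cube of order `n` with digit set `D`:
a nonempty compact set with `nK = K + D`. -/
def IsFractalCube (n : ℕ) {k : ℕ} (D K : Set (Pt k)) : Prop :=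
  K.Nonempty ∧ IsCompact K ∧ (n : ℝ) • K = K + D

/-- `α ∈ A_k = {−1, 0, 1}^k`. -/
def IsAk {k : ℕ} (α : Pt k) : Prop :=
  ∀ i, α i = -1 ∨ α i = 0 ∨ α i = 1

/-- The unit cube `P = [0,1]^k`. -/
def unitCube (k : ℕ) : Set (Pt k) := {x | ∀ i, 0 ≤ x i ∧ x i ≤ 1}

/-- The face `P_α = P ∩ (P + α)`. -/
def face {k : ℕ} (α : Pt k) : Set (Pt k) :=
  unitCube k ∩ ((fun x => x + α) '' unitCube k)

/-- `α ⊑ β` : `β i = α i` whenever `α i ≠ 0`. -/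
def SqLe {k : ℕ} (α β : Pt k) : Prop := ∀ i, α i ≠ 0 → β i = α i

/-- `α ⊏ β`. -/
def SqLt {k : ℕ} (α β : Pt k) : Prop := SqLe α β ∧ α ≠ β

/-- `F_α = K₁ ∩ (K₂ + α)`. -/
def interF {k : ℕ} (K1 K2 : Set (Pt k)) (α : Pt k) : Set (Pt k) :=
  K1 ∩ ((fun x => x + α) '' K2)

/-- `G_{αβ} = D₁ ∩ (D₂ + nα − β)`. -/
def Gab (n : ℕ) {k : ℕ} (D1 D2 : Set (Pt k)) (α β : Pt k) : Set (Pt k) :=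
  D1 ∩ ((fun x => x + ((n : ℝ) • α - β)) '' D2)

/-- `G_α = G_{αα} = D₁ ∩ (D₂ + (n−1)α)`. -/
def Ga (n : ℕ) {k : ℕ} (D1 D2 : Set (Pt k)) (α : Pt k) : Set (Pt k) :=
  Gab n D1 D2 α α

/-- `β ≻ α` : there is a chain `α = α₀ ⊏ α₁ ⊏ … ⊏ α_p = β` in `A_k` (`p ≥ 1`)
with all `F_{α_j}` nonempty and all `G_{α_{j−1} α_j}` nonempty. -/
def GSucc (n : ℕ) {k : ℕ} (D1 D2 K1 K2 : Set (Pt k)) (β α : Pt k) : Prop :=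
  ∃ p : ℕ, 0 < p ∧ ∃ c : ℕ → Pt k, c 0 = α ∧ c p = β ∧
    (∀ j ≤ p, IsAk (c j)) ∧
    (∀ j < p, SqLt (c j) (c (j + 1))) ∧
    (∀ j ≤ p, (interF K1 K2 (c j)).Nonempty) ∧
    (∀ j < p, (Gab n D1 D2 (c j) (c (j + 1))).Nonempty)

/-- `β ≽ α`. -/
def GSuccEq (n : ℕ) {k : ℕ} (D1 D2 K1 K2 : Set (Pt k)) (β α : Pt k) : Prop :=
  GSucc n D1 D2 K1 K2 β α ∨ β = α

/-- The map `S_d(x) = (x + d)/n`. -/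
def Sdig (n : ℕ) {k : ℕ} (d : Pt k) : Pt k → Pt k :=
  fun x => (n : ℝ)⁻¹ • (x + d)

/-- The `p`-th refinement digit set
`D^(p) = { n^{p−1} d₁ + n^{p−2} d₂ + … + d_p : (d₁, …, d_p) ∈ D^p }`. -/
def refineD (n p : ℕ) {k : ℕ} (D : Set (Pt k)) : Set (Pt k) :=
  {x | ∃ f : Fin p → Pt k, (∀ j, f j ∈ D) ∧
    x = ∑ j : Fin p, ((n : ℝ) ^ (p - 1 - (j : ℕ))) • f j}

/-- A maximal vertex of the structure graph: `F_β ≠ ∅` and no `γ ≻ β`. -/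
def IsMaxVertex (n : ℕ) {k : ℕ} (D1 D2 K1 K2 : Set (Pt k)) (β : Pt k) : Prop :=
  IsAk β ∧ (interF K1 K2 β).Nonempty ∧ ¬∃ γ, IsAk γ ∧ GSucc n D1 D2 K1 K2 γ β

/-- The product `∏ #G_{α_j α_{j+1}}` over consecutive pairs of a chain. -/
def chainProd (n : ℕ) {k : ℕ} (D1 D2 : Set (Pt k)) : List (Pt k) → ℕ
  | [] => 1
  | [_] => 1
  | a :: b :: rest => (Gab n D1 D2 a b).ncard * chainProd n D1 D2 (b :: rest)

/-- A chain `α = α₁ ⊏ α₂ ⊏ … ⊏ α_p = β` inside `Γ_α` ending at a maximal vertex `β`. -/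
def IsMaxChainFrom (n : ℕ) {k : ℕ} (D1 D2 K1 K2 : Set (Pt k)) (α : Pt k)
    (c : List (Pt k)) : Prop :=
  c ≠ [] ∧ c.head? = some α ∧ List.Chain' SqLt c ∧
  (∀ β ∈ c, IsAk β ∧ GSuccEq n D1 D2 K1 K2 β α) ∧
  ∃ β, c.getLast? = some β ∧ IsMaxVertex n D1 D2 K1 K2 β


namespace FC13

variable {k n : ℕ} {D1 D2 K1 K2 : Set (Pt k)}

lemma step_mem (hK1 : IsFractalCube n D1 K1) (hK2 : IsFractalCube n D2 K2)
    (hn : 2 ≤ n) {β γ g x : Pt k} (hg : g ∈ Gab n D1 D2 β γ)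
    (hx : x ∈ interF K1 K2 γ) :
    (n:ℝ)⁻¹ • (g + x) ∈ interF K1 K2 β := by
  have hn0 : (n:ℝ) ≠ 0 := by positivity
  obtain ⟨hg1, d, hd, hgd⟩ := hg
  obtain ⟨hx1, z, hz, hxz⟩ := hx
  have hgd' : g = d + ((n:ℝ) • β - γ) := by simpa using hgd.symm
  have hxz' : x = z + γ := by simpa using hxz.symm
  have h1 : g + x ∈ (n:ℝ) • K1 := by
    rw [hK1.2.2, add_comm g x]
    exact Set.add_mem_add hx1 hg1
  obtain ⟨y, hy, hyx⟩ := h1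
  have hyx' : g + x = (n:ℝ) • y := by simpa using hyx.symm
  have h2 : z + d ∈ (n:ℝ) • K2 := by
    rw [hK2.2.2]; exact Set.add_mem_add hz hd
  obtain ⟨w, hw, hwz⟩ := h2
  have hwz' : z + d = (n:ℝ) • w := by simpa using hwz.symm
  constructor
  · have : (n:ℝ)⁻¹ • (g + x) = y := by
      rw [hyx', smul_smul, inv_mul_cancel₀ hn0, one_smul]
    rw [this]; exact hy
  · refine ⟨w, hw, ?_⟩
    show w + β = (n:ℝ)⁻¹ • (g + x)
    have e1 : g + x = (n:ℝ) • (w + β) := by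
      rw [smul_add, ← hwz', hgd', hxz']
      abel
    rw [e1, smul_smul, inv_mul_cancel₀ hn0, one_smul]

lemma chain_mem (hK1 : IsFractalCube n D1 K1) (hK2 : IsFractalCube n D2 K2) (hn : 2 ≤ n) :
    ∀ (J : ℕ) (dig vert : ℕ → Pt k),
    (∀ m < J, dig m ∈ Gab n D1 D2 (vert m) (vert (m+1))) →
    ∀ x, x ∈ interF K1 K2 (vert J) →
    (∑ m ∈ Finset.range J, ((n:ℝ)⁻¹ ^ (m+1)) • dig m) + ((n:ℝ)⁻¹ ^ J) • x
      ∈ interF K1 K2 (vert 0) := by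
  intro J
  induction J with
  | zero => intro dig vert _ x hx; simpa using hx
  | succ J ih =>
    intro dig vert hd x hx
    have h1 := ih (fun m => dig (m+1)) (fun m => vert (m+1))
      (fun m hm => hd (m+1) (by omega)) x hx
    have h2 := step_mem hK1 hK2 hn (hd 0 (by omega)) h1
    have key : (∑ m ∈ Finset.range (J+1), ((n:ℝ)⁻¹ ^ (m+1)) • dig m) + ((n:ℝ)⁻¹ ^ (J+1)) • x
        = (n:ℝ)⁻¹ • (dig 0 + ((∑ m ∈ Finset.range J, ((n:ℝ)⁻¹ ^ (m+1)) • dig (m+1))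
            + ((n:ℝ)⁻¹ ^ J) • x)) := by
      rw [Finset.sum_range_succ']
      rw [smul_add, smul_add, Finset.smul_sum]
      simp only [smul_smul, pow_one, ← pow_succ']
      ring_nf
    rw [key]; exact h2

lemma digit_coord {D : Set (Pt k)} (hD : IsDigitSet n D) {v : Pt k} (hv : v ∈ D) (i : Fin k) :
    ((⌊v i⌋ : ℝ) = v i) ∧ 0 ≤ ⌊v i⌋ ∧ ⌊v i⌋ < (n:ℤ) := by
  obtain ⟨m, hm, he⟩ := hD.2 v hv i
  rw [he]
  refine ⟨by simp, by simp, ?_⟩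
  rw [Int.floor_natCast]
  exact_mod_cast hm

lemma norm_digit_le {D : Set (Pt k)} (hD : IsDigitSet n D) {v : Pt k} (hv : v ∈ D) :
    ‖v‖ ≤ (n:ℝ) := by
  rw [pi_norm_le_iff_of_nonneg (by positivity)]
  intro i
  obtain ⟨m, hm, he⟩ := hD.2 v hv i
  rw [he, Real.norm_natCast]
  exact_mod_cast hm.le

lemma summable_digits (hn : 2 ≤ n) (d : ℕ → Pt k) (hd : ∀ m, ‖d m‖ ≤ (n:ℝ)) :
    Summable (fun m => ((n:ℝ)⁻¹ ^ (m+1)) • d m) := by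
  have hn1 : (1:ℝ) < n := by exact_mod_cast hn.trans_lt' one_lt_two
  have h0 : (0:ℝ) < (n:ℝ)⁻¹ := by positivity
  have h1 : (n:ℝ)⁻¹ < 1 := inv_lt_one_of_one_lt₀ hn1
  refine Summable.of_norm_bounded (g := fun m => (n:ℝ)⁻¹ ^ m) (summable_geometric_of_lt_one h0.le h1) ?_
  intro m
  rw [norm_smul, norm_pow, Real.norm_eq_abs, abs_of_pos h0]
  calc (n:ℝ)⁻¹ ^ (m+1) * ‖d m‖ ≤ (n:ℝ)⁻¹ ^ (m+1) * n := by
        exact mul_le_mul_of_nonneg_left (hd m) (by positivity)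
    _ = (n:ℝ)⁻¹ ^ m * ((n:ℝ)⁻¹ * n) := by ring
    _ = (n:ℝ)⁻¹ ^ m := by
        rw [inv_mul_cancel₀ (by positivity : (n:ℝ) ≠ 0), mul_one]

lemma interF_isClosed (hK1 : IsFractalCube n D1 K1) (hK2 : IsFractalCube n D2 K2)
    (A : Pt k) : IsClosed (interF K1 K2 A) := by
  refine IsClosed.inter hK1.2.1.isClosed ?_
  exact (hK2.2.1.image (by continuity)).isClosed

lemma tsum_mem_interF (hK1 : IsFractalCube n D1 K1) (hK2 : IsFractalCube n D2 K2)
    (hn : 2 ≤ n) (hD1 : IsDigitSet n D1) {A : Pt k}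
    (hFA : (interF K1 K2 A).Nonempty)
    (d : ℕ → Pt k) (hd : ∀ m, d m ∈ Ga n D1 D2 A) :
    (∑' m, ((n:ℝ)⁻¹ ^ (m+1)) • d m) ∈ interF K1 K2 A := by
  obtain ⟨x₀, hx₀⟩ := hFA
  have hsum : Summable (fun m => ((n:ℝ)⁻¹ ^ (m+1)) • d m) :=
    summable_digits hn d (fun m => norm_digit_le hD1 (hd m).1)
  have hmem : ∀ M, (∑ m ∈ Finset.range M, ((n:ℝ)⁻¹ ^ (m+1)) • d m) + ((n:ℝ)⁻¹ ^ M) • x₀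
      ∈ interF K1 K2 A := by
    intro M
    exact chain_mem hK1 hK2 hn M d (fun _ => A) (fun m _ => hd m) x₀ hx₀
  have h1 : (1:ℝ) < n := by exact_mod_cast hn.trans_lt' one_lt_two
  have htend : Filter.Tendsto
      (fun M => (∑ m ∈ Finset.range M, ((n:ℝ)⁻¹ ^ (m+1)) • d m) + ((n:ℝ)⁻¹ ^ M) • x₀)
      Filter.atTop (nhds (∑' m, ((n:ℝ)⁻¹ ^ (m+1)) • d m)) := by
    have t1 := hsum.hasSum.tendsto_sum_nat
    have t2 : Filter.Tendsto (fun M => ((n:ℝ)⁻¹ ^ M) • x₀) Filter.atTop (nhds 0) := by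
      have := tendsto_pow_atTop_nhds_zero_of_lt_one (by positivity : (0:ℝ) ≤ (n:ℝ)⁻¹)
        (inv_lt_one_of_one_lt₀ h1)
      simpa using this.smul_const x₀
    simpa using t1.add t2
  exact (interF_isClosed hK1 hK2 A).mem_of_tendsto htend (Filter.Eventually.of_forall hmem)

/-- `⌊θ l^M⌋` : the first `M` base-`l` digits of `θ`, as an integer. -/
def NNf (l M : ℕ) (θ : ℝ) : ℤ := ⌊θ * l^M⌋

/-- the `r`-th base-`l` digit of `θ` (`r ≥ 1`). -/
def aN (l r : ℕ) (θ : ℝ) : ℕ := ((NNf l r θ - l * NNf l (r-1) θ).toNat) % l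

lemma aN_lt (hl : 0 < l) (r : ℕ) (θ : ℝ) : aN l r θ < l := Nat.mod_lt _ hl

lemma NNf_zero {l : ℕ} {θ : ℝ} (hθ : θ ∈ Set.Ico (0:ℝ) 1) : NNf l 0 θ = 0 := by
  simp only [NNf, pow_zero, mul_one]
  exact Int.floor_eq_zero_iff.2 (by simpa using hθ)

lemma aN_spec {l : ℕ} (hl : 0 < l) {θ : ℝ} (hθ : θ ∈ Set.Ico (0:ℝ) 1) {r : ℕ} (hr : 1 ≤ r) :
    NNf l r θ = l * NNf l (r-1) θ + aN l r θ := by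
  have hl0 : (0:ℝ) < l := by exact_mod_cast hl
  set x := θ * l^(r-1) with hx
  have hxr : θ * (l:ℝ)^r = x * l := by
    rw [hx]
    have hpow : (l:ℝ)^r = (l:ℝ)^(r-1) * (l:ℝ) := by
      rw [← pow_succ]; congr 1; omega
    rw [hpow]; ring
  have fl1 : (⌊x⌋:ℝ) ≤ x := Int.floor_le x
  have fl2 : x < ⌊x⌋ + 1 := Int.lt_floor_add_one x
  have low : l * ⌊x⌋ ≤ ⌊x * l⌋ := by
    rw [Int.le_floor]; push_cast; nlinarith
  have high : ⌊x * l⌋ < l * ⌊x⌋ + l := by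
    rw [Int.floor_lt]; push_cast; nlinarith
  have hNr : NNf l r θ = ⌊x * l⌋ := by rw [NNf, hxr]
  have hNr' : NNf l (r-1) θ = ⌊x⌋ := by rw [NNf, ← hx]
  have hd0 : 0 ≤ NNf l r θ - l * NNf l (r-1) θ := by rw [hNr, hNr']; omega
  have hdl : NNf l r θ - l * NNf l (r-1) θ < l := by rw [hNr, hNr']; omega
  have hmod : (aN l r θ : ℤ) = NNf l r θ - l * NNf l (r-1) θ := by
    rw [aN]
    have hlt : (NNf l r θ - l * NNf l (r-1) θ).toNat < l := by
      rw [hNr, hNr']; omega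
    rw [Nat.mod_eq_of_lt hlt]
    exact Int.toNat_of_nonneg hd0
  rw [hNr, hNr'] at hmod ⊢
  omega

lemma NNf_of_aN {l : ℕ} (hl : 0 < l) {θ θ' : ℝ} (hθ : θ ∈ Set.Ico (0:ℝ) 1)
    (hθ' : θ' ∈ Set.Ico (0:ℝ) 1) (M : ℕ)
    (h : ∀ r, 1 ≤ r → r ≤ M → aN l r θ = aN l r θ') :
    NNf l M θ = NNf l M θ' := by
  induction M with
  | zero => rw [NNf_zero hθ, NNf_zero hθ']
  | succ M ih =>
    have h1 := aN_spec hl hθ (show 1 ≤ M+1 by omega)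
    have h2 := aN_spec hl hθ' (show 1 ≤ M+1 by omega)
    simp only [Nat.add_sub_cancel] at h1 h2
    rw [h1, h2, ih (fun r hr hrM => h r hr (by omega)), h (M+1) (by omega) le_rfl]

lemma fiber_volume {l : ℕ} (hl : 0 < l) (M : ℕ) (W : ℤ) :
    volume {θ : ℝ | θ ∈ Set.Ico (0:ℝ) 1 ∧ NNf l M θ = W}
      ≤ ENNReal.ofReal ((l:ℝ)⁻¹ ^ M) := by
  have hL : (0:ℝ) < (l:ℝ)^M := by positivity
  have hsub : {θ : ℝ | θ ∈ Set.Ico (0:ℝ) 1 ∧ NNf l M θ = W}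
      ⊆ Set.Ico ((W:ℝ)/(l:ℝ)^M) (((W:ℝ)+1)/(l:ℝ)^M) := by
    rintro θ ⟨hθ, hW⟩
    simp only [NNf] at hW
    have h1 : (W:ℝ) ≤ θ * (l:ℝ)^M := by
      rw [← hW]; exact Int.floor_le _
    have h2 : θ * (l:ℝ)^M < (W:ℝ) + 1 := by
      rw [← hW]; exact Int.lt_floor_add_one _
    constructor
    · rw [div_le_iff₀ hL]; linarith
    · rw [lt_div_iff₀ hL]; linarith
  calc volume _ ≤ volume (Set.Ico ((W:ℝ)/(l:ℝ)^M) (((W:ℝ)+1)/(l:ℝ)^M)) := measure_mono hsub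
    _ = ENNReal.ofReal (((W:ℝ)+1)/(l:ℝ)^M - (W:ℝ)/(l:ℝ)^M) := Real.volume_Ico
    _ = ENNReal.ofReal ((l:ℝ)⁻¹ ^ M) := by
        rw [div_sub_div_same]
        norm_num [inv_pow]

lemma int_digits_unique {n : ℕ} (hn : 1 ≤ n) (d e : ℕ → ℤ)
    (hd : ∀ m, 0 ≤ d m ∧ d m < n) (he : ∀ m, 0 ≤ e m ∧ e m < n) :
    ∀ (t : ℕ), (∑ m ∈ Finset.range t, d m * (n:ℤ)^(t-1-m))
      = (∑ m ∈ Finset.range t, e m * (n:ℤ)^(t-1-m)) →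
    ∀ m < t, d m = e m := by
  intro t
  induction t with
  | zero => omega
  | succ t ih =>
    intro hsum
    rw [Finset.sum_range_succ, Finset.sum_range_succ] at hsum
    simp only [Nat.add_sub_cancel, Nat.sub_self, pow_zero, mul_one] at hsum
    have hre : ∀ f : ℕ → ℤ, (∑ m ∈ Finset.range t, f m * (n:ℤ)^(t-m))
        = n * ∑ m ∈ Finset.range t, f m * (n:ℤ)^(t-1-m) := by
      intro f
      rw [Finset.mul_sum]
      refine Finset.sum_congr rfl (fun m hm => ?_)
      have hm' : m < t := Finset.mem_range.1 hm
      have h3 : t-m = (t-1-m) + 1 := by omega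
      rw [h3, pow_succ]; ring
    rw [hre d, hre e] at hsum
    set A := ∑ m ∈ Finset.range t, d m * (n:ℤ)^(t-1-m) with hA
    set B := ∑ m ∈ Finset.range t, e m * (n:ℤ)^(t-1-m) with hB
    have hdt : d t = (n * A + d t) % n := by
      rw [add_comm, mul_comm, Int.add_mul_emod_self_right,
        Int.emod_eq_of_lt (hd t).1 (hd t).2]
    have het : e t = (n * B + e t) % n := by
      rw [add_comm, mul_comm, Int.add_mul_emod_self_right,
        Int.emod_eq_of_lt (he t).1 (he t).2]
    have hlast : d t = e t := by rw [hdt, hsum, ← het]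
    have hn0 : (n:ℤ) ≠ 0 := by exact_mod_cast (by omega : n ≠ 0)
    have hABeq : A = B := by
      have h4 : (n:ℤ) * A = n * B := by omega
      exact mul_left_cancel₀ hn0 h4
    intro m hm
    rcases Nat.lt_succ_iff_lt_or_eq.1 hm with hm' | hm'
    · exact ih hABeq m hm'
    · rw [hm']; exact hlast


/-- Digit (vector) of the `j`-th branch coding at position `m` (0-indexed). -/
def dg {k : ℕ} (l q : ℕ) (e0 ea gd : ℕ → Pt k) (j : ℕ) (θ : ℝ) (m : ℕ) : Pt k :=
  if m < j then e0 (aN l (m+1) θ)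
  else if m < j + q then gd (m - j)
  else ea (aN l (m+1-q) θ)

/-- The `j`-th branch coding map. -/
def Phi {k : ℕ} (n l q : ℕ) (e0 ea gd : ℕ → Pt k) (j : ℕ) (θ : ℝ) : Pt k :=
  ∑' m, ((n:ℝ)⁻¹ ^ (m+1)) • dg l q e0 ea gd j θ m

/-- Truncation of `Phi` to the first `t` digits. -/
def posP {k : ℕ} (n l q : ℕ) (e0 ea gd : ℕ → Pt k) (t j : ℕ) (θ : ℝ) : Pt k :=
  ∑ m ∈ Finset.range t, ((n:ℝ)⁻¹ ^ (m+1)) • dg l q e0 ea gd j θ m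

section Coding

variable {k n : ℕ} {D1 D2 K1 K2 : Set (Pt k)} {l q : ℕ} {e0 ea gd : ℕ → Pt k}

lemma dg_mem_D1 (hl : 1 ≤ l)
    (he0 : ∀ m < l, e0 m ∈ D1) (hea : ∀ m < l, ea m ∈ D1) (hgd : ∀ i < q, gd i ∈ D1)
    (j : ℕ) (θ : ℝ) (m : ℕ) : dg l q e0 ea gd j θ m ∈ D1 := by
  rw [dg]
  split_ifs with h1 h2
  · exact he0 _ (aN_lt hl _ _)
  · exact hgd _ (by omega)
  · exact hea _ (aN_lt hl _ _)

lemma Phi_summable (hn : 2 ≤ n) (hD1 : IsDigitSet n D1) (hl : 1 ≤ l)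
    (he0 : ∀ m < l, e0 m ∈ D1) (hea : ∀ m < l, ea m ∈ D1) (hgd : ∀ i < q, gd i ∈ D1)
    (j : ℕ) (θ : ℝ) :
    Summable (fun m => ((n:ℝ)⁻¹ ^ (m+1)) • dg l q e0 ea gd j θ m) :=
  summable_digits hn _ (fun m => norm_digit_le hD1 (dg_mem_D1 hl he0 hea hgd j θ m))

lemma dg_lt {j θ m} (h : m < j) :
    dg (k := k) l q e0 ea gd j θ m = e0 (aN l (m+1) θ) := by
  rw [dg, if_pos h]

lemma dg_mid {j θ m} (h1 : j ≤ m) (h2 : m < j + q) :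
    dg (k := k) l q e0 ea gd j θ m = gd (m - j) := by
  rw [dg, if_neg (by omega), if_pos h2]

lemma dg_tail {j θ m} (h : j + q ≤ m) :
    dg (k := k) l q e0 ea gd j θ m = ea (aN l (m+1-q) θ) := by
  rw [dg, if_neg (by omega), if_neg (by omega)]

lemma Phi_mem (hK1 : IsFractalCube n D1 K1) (hK2 : IsFractalCube n D2 K2)
    (hn : 2 ≤ n) (hD1 : IsDigitSet n D1) (hl : 1 ≤ l) (hq : 1 ≤ q)
    {α : Pt k} {c : ℕ → Pt k} (hc0 : c 0 = 0) (hcq : c q = α)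
    (hFα : (interF K1 K2 α).Nonempty)
    (he0 : ∀ m < l, e0 m ∈ Ga n D1 D2 0) (hea : ∀ m < l, ea m ∈ Ga n D1 D2 α)
    (hgd : ∀ i < q, gd i ∈ Gab n D1 D2 (c i) (c (i+1)))
    (j : ℕ) (θ : ℝ) :
    Phi n l q e0 ea gd j θ ∈ interF K1 K2 0 := by
  have he0D : ∀ m < l, e0 m ∈ D1 := fun m hm => (he0 m hm).1
  have heaD : ∀ m < l, ea m ∈ D1 := fun m hm => (hea m hm).1
  have hgdD : ∀ i < q, gd i ∈ D1 := fun i hi => (hgd i hi).1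
  have hsum := Phi_summable (e0 := e0) (ea := ea) (gd := gd) hn hD1 hl he0D heaD hgdD j θ
  set y : Pt k := ∑' m, ((n:ℝ)⁻¹ ^ (m+1)) • ea (aN l (m+j+1) θ) with hy
  have hymem : y ∈ interF K1 K2 α := by
    exact tsum_mem_interF hK1 hK2 hn hD1 hFα _ (fun m => hea _ (aN_lt hl _ _))
  have hsplit := Summable.sum_add_tsum_nat_add (f := fun m => ((n:ℝ)⁻¹ ^ (m+1)) • dg l q e0 ea gd j θ m)
    (j+q) hsum
  have htail : (∑' m, ((n:ℝ)⁻¹ ^ ((m+(j+q))+1)) • dg l q e0 ea gd j θ (m+(j+q)))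
      = ((n:ℝ)⁻¹ ^ (j+q)) • y := by
    rw [hy, ← tsum_const_smul'' ((n:ℝ)⁻¹ ^ (j+q))]
    refine tsum_congr (fun m => ?_)
    rw [dg_tail (by omega)]
    rw [show (m+(j+q))+1-q = m+j+1 by omega]
    rw [smul_smul, ← pow_add]
    rw [show (j+q)+(m+1) = m+(j+q)+1 by omega]
  have hΦ : Phi n l q e0 ea gd j θ
      = (∑ m ∈ Finset.range (j+q), ((n:ℝ)⁻¹ ^ (m+1)) • dg l q e0 ea gd j θ m)
        + ((n:ℝ)⁻¹ ^ (j+q)) • y := by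
    rw [Phi, ← hsplit, htail]
  rw [hΦ]
  have hmain := chain_mem hK1 hK2 hn (j+q) (dg l q e0 ea gd j θ)
    (fun m => if m ≤ j then 0 else c (m-j)) ?_ y ?_
  · simpa using hmain
  · intro m hm
    show dg l q e0 ea gd j θ m ∈ Gab n D1 D2
      (if m ≤ j then 0 else c (m-j)) (if m+1 ≤ j then 0 else c (m+1-j))
    by_cases h1 : m < j
    · rw [dg_lt h1, if_pos (by omega : m ≤ j), if_pos (by omega : m+1 ≤ j)]
      exact he0 _ (aN_lt hl _ _)
    · rw [dg_mid (by omega) hm, if_neg (by omega : ¬ (m+1 ≤ j))]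
      have hg := hgd (m-j) (by omega)
      by_cases h3 : m = j
      · rw [if_pos (by omega : m ≤ j)]
        rw [show m+1-j = (m-j)+1 by omega]
        subst h3
        rw [Nat.sub_self] at hg ⊢
        rwa [hc0] at hg
      · rw [if_neg (by omega : ¬ (m ≤ j))]
        rw [show m+1-j = (m-j)+1 by omega]
        exact hg
  · show y ∈ interF K1 K2 (if j+q ≤ j then 0 else c (j+q-j))
    rw [if_neg (by omega), show j+q-j = q by omega, hcq]
    exact hymem

lemma posP_dist (hn : 2 ≤ n) (hD1 : IsDigitSet n D1) (hl : 1 ≤ l)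
    (he0 : ∀ m < l, e0 m ∈ D1) (hea : ∀ m < l, ea m ∈ D1) (hgd : ∀ i < q, gd i ∈ D1)
    (t j : ℕ) (θ : ℝ) :
    ‖Phi n l q e0 ea gd j θ - posP n l q e0 ea gd t j θ‖ ≤ 2 * (n:ℝ)⁻¹ ^ t := by
  have hsum := Phi_summable (e0 := e0) (ea := ea) (gd := gd) hn hD1 hl he0 hea hgd j θ
  have hsplit := Summable.sum_add_tsum_nat_add (f := fun m => ((n:ℝ)⁻¹ ^ (m+1)) • dg l q e0 ea gd j θ m)
    t hsum
  have hdiff : Phi n l q e0 ea gd j θ - posP n l q e0 ea gd t j θ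
      = ∑' m, ((n:ℝ)⁻¹ ^ ((m+t)+1)) • dg l q e0 ea gd j θ (m+t) := by
    rw [Phi, posP, ← hsplit]; abel
  rw [hdiff]
  have hb : ∀ m : ℕ, ‖((n:ℝ)⁻¹ ^ ((m+t)+1)) • dg l q e0 ea gd j θ (m+t)‖
      ≤ (n:ℝ)⁻¹ ^ (m+t) := by
    intro m
    have h0 : (0:ℝ) < (n:ℝ)⁻¹ := by positivity
    rw [norm_smul, norm_pow, Real.norm_eq_abs, abs_of_pos h0]
    calc (n:ℝ)⁻¹ ^ (m+t+1) * ‖dg l q e0 ea gd j θ (m+t)‖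
        ≤ (n:ℝ)⁻¹ ^ (m+t+1) * n := by
          exact mul_le_mul_of_nonneg_left
            (norm_digit_le hD1 (dg_mem_D1 hl he0 hea hgd j θ (m+t))) (by positivity)
      _ = (n:ℝ)⁻¹ ^ (m+t) * ((n:ℝ)⁻¹ * n) := by ring
      _ = (n:ℝ)⁻¹ ^ (m+t) := by
          rw [inv_mul_cancel₀ (by positivity : (n:ℝ) ≠ 0), mul_one]
  have hsum2 : Summable (fun m : ℕ => (n:ℝ)⁻¹ ^ (m+t)) := by
    have h1 : (1:ℝ) < n := by exact_mod_cast hn.trans_lt' one_lt_two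
    exact ((summable_geometric_of_lt_one (by positivity)
      (inv_lt_one_of_one_lt₀ h1)).mul_right _).congr (fun m => by rw [pow_add])
  calc ‖∑' m, ((n:ℝ)⁻¹ ^ ((m+t)+1)) • dg l q e0 ea gd j θ (m+t)‖
      ≤ ∑' m, (n:ℝ)⁻¹ ^ (m+t) := by
        refine norm_tsum_le_tsum_norm ?_ |>.trans (Summable.tsum_le_tsum hb ?_ hsum2)
        · exact hsum2.of_nonneg_of_le (fun m => norm_nonneg _) hb
        · exact hsum2.of_nonneg_of_le (fun m => norm_nonneg _) hb
    _ ≤ 2 * (n:ℝ)⁻¹ ^ t := by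
        have h1 : (1:ℝ) < n := by exact_mod_cast hn.trans_lt' one_lt_two
        have hi1 : (n:ℝ)⁻¹ < 1 := inv_lt_one_of_one_lt₀ h1
        have : (∑' m : ℕ, (n:ℝ)⁻¹ ^ (m+t)) = (1 - (n:ℝ)⁻¹)⁻¹ * (n:ℝ)⁻¹ ^ t := by
          rw [tsum_congr (fun m => by rw [pow_add]), tsum_mul_right,
            tsum_geometric_of_lt_one (by positivity) hi1]
        rw [this]
        have h2 : (1 - (n:ℝ)⁻¹)⁻¹ ≤ 2 := by
          have hn2 : (n:ℝ)⁻¹ ≤ 2⁻¹ := by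
            rw [inv_le_inv₀ (by positivity) (by norm_num)]
            exact_mod_cast hn
          rw [inv_le_comm₀ (by linarith) (by norm_num)]
          linarith
        have h3 : (0:ℝ) ≤ (n:ℝ)⁻¹ ^ t := by positivity
        nlinarith

end Coding

/-- The integer grid position of the `t`-truncation. -/
def zI {k : ℕ} (n l q : ℕ) (e0 ea gd : ℕ → Pt k) (t j : ℕ) (θ : ℝ) (i : Fin k) : ℤ :=
  ∑ m ∈ Finset.range t, ⌊dg l q e0 ea gd j θ m i⌋ * (n:ℤ)^(t-1-m)

section Coding2

variable {k n : ℕ} {D1 D2 K1 K2 : Set (Pt k)} {l q : ℕ} {e0 ea gd : ℕ → Pt k}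

lemma zI_cast (hn : 2 ≤ n) (hD1 : IsDigitSet n D1) (hl : 1 ≤ l)
    (he0 : ∀ m < l, e0 m ∈ D1) (hea : ∀ m < l, ea m ∈ D1) (hgd : ∀ i < q, gd i ∈ D1)
    (t j : ℕ) (θ : ℝ) (i : Fin k) :
    ((zI n l q e0 ea gd t j θ i : ℤ) : ℝ) = (n:ℝ)^t * posP n l q e0 ea gd t j θ i := by
  rw [zI, posP]
  have hev : (∑ m ∈ Finset.range t, ((n:ℝ)⁻¹ ^ (m+1)) • dg l q e0 ea gd j θ m) i
      = ∑ m ∈ Finset.range t, ((n:ℝ)⁻¹ ^ (m+1)) * dg l q e0 ea gd j θ m i := by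
    rw [Finset.sum_apply]
    rfl
  rw [hev, Finset.mul_sum]
  push_cast
  refine Finset.sum_congr rfl (fun m hm => ?_)
  have hm' : m < t := Finset.mem_range.1 hm
  have hfl : ((⌊dg l q e0 ea gd j θ m i⌋ : ℤ) : ℝ) = dg l q e0 ea gd j θ m i :=
    (digit_coord hD1 (dg_mem_D1 hl he0 hea hgd j θ m) i).1
  rw [hfl]
  have hpow : (n:ℝ)^t = (n:ℝ)^(t-1-m) * (n:ℝ)^(m+1) := by
    rw [← pow_add]; congr 1; omega
  rw [hpow, inv_pow]
  field_simp

lemma dg_eq_of_zI_eq (hn : 2 ≤ n) (hD1 : IsDigitSet n D1) (hl : 1 ≤ l)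
    (he0 : ∀ m < l, e0 m ∈ D1) (hea : ∀ m < l, ea m ∈ D1) (hgd : ∀ i < q, gd i ∈ D1)
    {t j j' : ℕ} {θ θ' : ℝ}
    (hz : ∀ i, zI n l q e0 ea gd t j θ i = zI n l q e0 ea gd t j' θ' i) :
    ∀ m < t, dg l q e0 ea gd j θ m = dg l q e0 ea gd j' θ' m := by
  intro m hm
  funext i
  have hb1 : ∀ m', 0 ≤ ⌊dg l q e0 ea gd j θ m' i⌋ ∧ ⌊dg l q e0 ea gd j θ m' i⌋ < (n:ℤ) :=
    fun m' => ((digit_coord hD1 (dg_mem_D1 hl he0 hea hgd j θ m') i).2)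
  have hb2 : ∀ m', 0 ≤ ⌊dg l q e0 ea gd j' θ' m' i⌋ ∧ ⌊dg l q e0 ea gd j' θ' m' i⌋ < (n:ℤ) :=
    fun m' => ((digit_coord hD1 (dg_mem_D1 hl he0 hea hgd j' θ' m') i).2)
  have key := int_digits_unique (by omega : 1 ≤ n) _ _ hb1 hb2 t (hz i) m hm
  have hf1 : ((⌊dg l q e0 ea gd j θ m i⌋ : ℤ) : ℝ) = dg l q e0 ea gd j θ m i :=
    (digit_coord hD1 (dg_mem_D1 hl he0 hea hgd j θ m) i).1
  have hf2 : ((⌊dg l q e0 ea gd j' θ' m i⌋ : ℤ) : ℝ) = dg l q e0 ea gd j' θ' m i :=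
    (digit_coord hD1 (dg_mem_D1 hl he0 hea hgd j' θ' m) i).1
  rw [← hf1, ← hf2, key]

lemma aN_eq_of_dg_eq (hl : 1 ≤ l)
    (he0i : ∀ m m', m < l → m' < l → e0 m = e0 m' → m = m')
    (heai : ∀ m m', m < l → m' < l → ea m = ea m' → m = m')
    {t j : ℕ} {θ θ' : ℝ} (ht : j < t)
    (hdg : ∀ m < t, dg l q e0 ea gd j θ m = dg l q e0 ea gd j θ' m) :
    ∀ r, 1 ≤ r → r ≤ max j (t-q) → aN l r θ = aN l r θ' := by
  intro r hr1 hr2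
  by_cases hrj : r ≤ j
  · have h := hdg (r-1) (by omega)
    rw [dg_lt (by omega : r-1 < j), dg_lt (by omega : r-1 < j)] at h
    rw [show r-1+1 = r by omega] at h
    exact he0i _ _ (aN_lt hl _ _) (aN_lt hl _ _) h
  · have hrt : r ≤ t - q := by
      rcases le_max_iff.1 hr2 with h | h
      · omega
      · exact h
    have hm1 : j + q ≤ r+q-1 := by omega
    have hm2 : r+q-1 < t := by omega
    have h := hdg (r+q-1) hm2
    rw [dg_tail hm1, dg_tail hm1] at h
    rw [show r+q-1+1-q = r by omega] at h
    exact heai _ _ (aN_lt hl _ _) (aN_lt hl _ _) h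

lemma no_far_pair {α : Pt k} (hq : 1 ≤ q) (hl : 1 ≤ l)
    (hea : ∀ m < l, ea m ∈ Ga n D1 D2 α) (hg1 : gd 0 ∉ Ga n D1 D2 α)
    {t j j' : ℕ} {θ θ' : ℝ} (hjj : j + q ≤ j') (hj't : j' < t)
    (hdg : dg (k := k) l q e0 ea gd j θ j' = dg l q e0 ea gd j' θ' j') : False := by
  rw [dg_tail hjj, dg_mid le_rfl (by omega)] at hdg
  rw [Nat.sub_self] at hdg
  exact hg1 (hdg ▸ hea _ (aN_lt hl _ _))

end Coding2

section Meas

variable {k n : ℕ} {D1 D2 K1 K2 : Set (Pt k)} {l q : ℕ} {e0 ea gd : ℕ → Pt k}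

lemma measurable_aN (l r : ℕ) : Measurable (aN l r) := by
  have m1 : Measurable fun θ : ℝ => ⌊θ * (l:ℝ)^r⌋ :=
    Int.measurable_floor.comp (measurable_id.mul_const _)
  have m2 : Measurable fun θ : ℝ => ⌊θ * (l:ℝ)^(r-1)⌋ :=
    Int.measurable_floor.comp (measurable_id.mul_const _)
  have m3 : Measurable fun θ : ℝ => (NNf l r θ - l * NNf l (r-1) θ) := by
    simp only [NNf]
    exact m1.sub (m2.const_mul _)
  exact (Measurable.of_discrete (f := fun z : ℤ => z.toNat % l)).comp m3

lemma measurable_dg (j m : ℕ) : Measurable (fun θ => dg (k := k) l q e0 ea gd j θ m) := by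
  by_cases h1 : m < j
  · simp only [dg, if_pos h1]
    exact (Measurable.of_discrete (f := e0)).comp (measurable_aN l (m+1))
  · by_cases h2 : m < j + q
    · simp only [dg, if_neg h1, if_pos h2]
      exact measurable_const
    · simp only [dg, if_neg h1, if_neg h2]
      exact (Measurable.of_discrete (f := ea)).comp (measurable_aN l (m+1-q))

lemma measurable_Phi (hn : 2 ≤ n) (hD1 : IsDigitSet n D1) (hl : 1 ≤ l)
    (he0 : ∀ m < l, e0 m ∈ D1) (hea : ∀ m < l, ea m ∈ D1) (hgd : ∀ i < q, gd i ∈ D1)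
    (j : ℕ) : Measurable (Phi n l q e0 ea gd j) := by
  have hpart : ∀ M : ℕ, Measurable (fun θ => posP n l q e0 ea gd M j θ) := by
    intro M
    refine Finset.measurable_sum _ (fun m _ => ?_)
    exact Measurable.const_smul (measurable_dg j m) (((n:ℝ))⁻¹ ^ (m+1))
  refine measurable_of_tendsto_metrizable hpart ?_
  rw [tendsto_pi_nhds]
  intro θ
  exact (Phi_summable hn hD1 hl he0 hea hgd j θ).hasSum.tendsto_sum_nat

/-- The `z`-fiber within the `j`-th branch. -/
def Sset {k : ℕ} (n l q : ℕ) (e0 ea gd : ℕ → Pt k) (t j : ℕ) (z : Fin k → ℤ) : Set ℝ :=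
  {θ | θ ∈ Set.Ico (0:ℝ) 1 ∧ ∀ i, zI n l q e0 ea gd t j θ i = z i}

lemma Sset_vol (hn : 2 ≤ n) (hD1 : IsDigitSet n D1) (hl : 1 ≤ l)
    (he0 : ∀ m < l, e0 m ∈ D1) (hea : ∀ m < l, ea m ∈ D1) (hgd : ∀ i < q, gd i ∈ D1)
    (he0i : ∀ m m', m < l → m' < l → e0 m = e0 m' → m = m')
    (heai : ∀ m m', m < l → m' < l → ea m = ea m' → m = m')
    {t j : ℕ} (hjt : j < t) (z : Fin k → ℤ) :
    volume (Sset n l q e0 ea gd t j z) ≤ ENNReal.ofReal ((l:ℝ)^q * (l:ℝ)⁻¹^t) := by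
  rcases Set.eq_empty_or_nonempty (Sset n l q e0 ea gd t j z) with he | ⟨θ₀, hθ₀⟩
  · rw [he]; simp
  · set M := max j (t-q) with hM
    have hsub : Sset n l q e0 ea gd t j z
        ⊆ {θ : ℝ | θ ∈ Set.Ico (0:ℝ) 1 ∧ NNf l M θ = NNf l M θ₀} := by
      rintro θ ⟨hθI, hθz⟩
      refine ⟨hθI, ?_⟩
      have hz : ∀ i, zI n l q e0 ea gd t j θ i = zI n l q e0 ea gd t j θ₀ i := by
        intro i; rw [hθz i, hθ₀.2 i]
      have hdg := dg_eq_of_zI_eq hn hD1 hl he0 hea hgd hz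
      have haN := aN_eq_of_dg_eq hl he0i heai hjt hdg
      exact NNf_of_aN (by omega) hθI hθ₀.1 M (fun r h1 h2 => haN r h1 h2)
    calc volume (Sset n l q e0 ea gd t j z)
        ≤ volume {θ : ℝ | θ ∈ Set.Ico (0:ℝ) 1 ∧ NNf l M θ = NNf l M θ₀} := measure_mono hsub
      _ ≤ ENNReal.ofReal ((l:ℝ)⁻¹^M) := fiber_volume (by omega) M _
      _ ≤ ENNReal.ofReal ((l:ℝ)^q * (l:ℝ)⁻¹^t) := by
          refine ENNReal.ofReal_le_ofReal ?_
          have hl1 : (1:ℝ) ≤ l := by exact_mod_cast hl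
          have hli : (0:ℝ) < (l:ℝ)⁻¹ := by positivity
          have h1 : (l:ℝ)⁻¹^M ≤ (l:ℝ)⁻¹^(t-q) := by
            refine pow_le_pow_of_le_one hli.le ?_ ?_
            · rw [inv_le_one_iff₀]; right; exact hl1
            · omega
          refine h1.trans ?_
          by_cases hqt : q ≤ t
          · have : t = (t-q) + q := by omega
            rw [this, pow_add]
            have hcan : (l:ℝ)^q * ((l:ℝ)⁻¹^(t-q) * (l:ℝ)⁻¹^q)
                = (l:ℝ)⁻¹^(t-q) * ((l:ℝ)^q * (l:ℝ)⁻¹^q) := by ring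
            rw [hcan, ← mul_pow, mul_inv_cancel₀ (by positivity : (l:ℝ) ≠ 0), one_pow, mul_one]
            rw [show (t-q)+q-q = t-q by omega]
          · have h2 : t - q = 0 := by omega
            rw [h2, pow_zero]
            have h3 : (l:ℝ)⁻¹^t ≥ (l:ℝ)⁻¹^q := by
              refine pow_le_pow_of_le_one hli.le ?_ (by omega)
              rw [inv_le_one_iff₀]; right; exact hl1
            calc (1:ℝ) = (l:ℝ)^q * (l:ℝ)⁻¹^q := by
                  rw [← mul_pow, mul_inv_cancel₀ (by positivity : (l:ℝ) ≠ 0), one_pow]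
              _ ≤ (l:ℝ)^q * (l:ℝ)⁻¹^t := by
                  exact mul_le_mul_of_nonneg_left h3 (by positivity)

lemma sum_over_j {α : Pt k} (hn : 2 ≤ n) (hD1 : IsDigitSet n D1) (hl : 1 ≤ l) (hq : 1 ≤ q)
    (he0 : ∀ m < l, e0 m ∈ D1) (hea : ∀ m < l, ea m ∈ Ga n D1 D2 α) (hgd : ∀ i < q, gd i ∈ D1)
    (he0i : ∀ m m', m < l → m' < l → e0 m = e0 m' → m = m')
    (heai : ∀ m m', m < l → m' < l → ea m = ea m' → m = m')
    (hg1 : gd 0 ∉ Ga n D1 D2 α)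
    {T t : ℕ} (ht : T + 1 ≤ t) (z : Fin k → ℤ) :
    (∑ j ∈ Finset.range (T+1), volume (Sset n l q e0 ea gd t j z))
      ≤ (q : ℝ≥0∞) * ENNReal.ofReal ((l:ℝ)^q * (l:ℝ)⁻¹^t) := by
  have heaD : ∀ m < l, ea m ∈ D1 := fun m hm => (hea m hm).1
  classical
  set Jset := (Finset.range (T+1)).filter (fun j => (Sset n l q e0 ea gd t j z).Nonempty)
    with hJ
  have hsum_eq : (∑ j ∈ Finset.range (T+1), volume (Sset n l q e0 ea gd t j z))
      = ∑ j ∈ Jset, volume (Sset n l q e0 ea gd t j z) := by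
    rw [hJ]
    refine (Finset.sum_filter_of_ne ?_).symm
    intro j _ hne
    rcases Set.eq_empty_or_nonempty (Sset n l q e0 ea gd t j z) with he | hne'
    · exact absurd (by rw [he]; simp) hne
    · exact hne'
  rw [hsum_eq]
  rcases Finset.eq_empty_or_nonempty Jset with hJe | hJne
  · rw [hJe]; simp
  · set j₀ := Jset.min' hJne with hj₀
    have hwindow : Jset ⊆ Finset.Ico j₀ (j₀ + q) := by
      intro j hj
      rw [Finset.mem_Ico]
      refine ⟨Jset.min'_le j hj, ?_⟩
      by_contra hge
      push_neg at hge
      have hj₀mem := Jset.min'_mem hJne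
      obtain ⟨hj₀r, θ₀, hθ₀⟩ := Finset.mem_filter.1 hj₀mem
      obtain ⟨hjr, θ', hθ'⟩ := Finset.mem_filter.1 hj
      have hz : ∀ i, zI n l q e0 ea gd t j₀ θ₀ i = zI n l q e0 ea gd t j θ' i := by
        intro i; rw [hθ₀.2 i, hθ'.2 i]
      have hdg := dg_eq_of_zI_eq hn hD1 hl he0 heaD hgd hz
      have hjt : j < t := by
        have := Finset.mem_range.1 hjr; omega
      exact no_far_pair hq hl hea hg1 (by omega) hjt (hdg j hjt)
    calc (∑ j ∈ Jset, volume (Sset n l q e0 ea gd t j z))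
        ≤ ∑ j ∈ Jset, ENNReal.ofReal ((l:ℝ)^q * (l:ℝ)⁻¹^t) := by
          refine Finset.sum_le_sum (fun j hj => ?_)
          have hjt : j < t := by
            have := Finset.mem_range.1 (Finset.mem_filter.1 hj).1
            omega
          exact Sset_vol hn hD1 hl he0 heaD hgd he0i heai hjt z
      _ = (Jset.card : ℝ≥0∞) * ENNReal.ofReal ((l:ℝ)^q * (l:ℝ)⁻¹^t) := by
          rw [Finset.sum_const, nsmul_eq_mul]
      _ ≤ (q : ℝ≥0∞) * ENNReal.ofReal ((l:ℝ)^q * (l:ℝ)⁻¹^t) := by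
          refine mul_le_mul_left ?_ _
          have := Finset.card_le_card hwindow
          rw [Nat.card_Ico] at this
          exact_mod_cast this.trans (by omega)

lemma cube_bound {α : Pt k} (hK1 : IsFractalCube n D1 K1) (hK2 : IsFractalCube n D2 K2)
    (hn : 2 ≤ n) (hD1 : IsDigitSet n D1) (hl : 1 ≤ l) (hq : 1 ≤ q)
    (he0 : ∀ m < l, e0 m ∈ D1) (hea : ∀ m < l, ea m ∈ Ga n D1 D2 α) (hgd : ∀ i < q, gd i ∈ D1)
    (he0i : ∀ m m', m < l → m' < l → e0 m = e0 m' → m = m')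
    (heai : ∀ m m', m < l → m' < l → ea m = ea m' → m = m')
    (hg1 : gd 0 ∉ Ga n D1 D2 α)
    {T t : ℕ} (ht : T + 1 ≤ t) (x₀ : Pt k) :
    (∑ j ∈ Finset.range (T+1),
        Measure.map (Phi n l q e0 ea gd j) (volume.restrict (Set.Ico (0:ℝ) 1)))
      (Metric.closedBall x₀ ((n:ℝ)⁻¹^t))
    ≤ (9:ℝ≥0∞)^k * q * ENNReal.ofReal ((l:ℝ)^q * (l:ℝ)⁻¹^t) := by
  classical
  have heaD : ∀ m < l, ea m ∈ D1 := fun m hm => (hea m hm).1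
  set Z : Finset (Fin k → ℤ) := Fintype.piFinset
    (fun i => Finset.Icc (⌈(n:ℝ)^t * x₀ i⌉ - 4) (⌈(n:ℝ)^t * x₀ i⌉ + 4)) with hZ
  have hcard : Z.card = 9^k := by
    rw [hZ, Fintype.card_piFinset]
    have : ∀ i : Fin k, (Finset.Icc (⌈(n:ℝ)^t * x₀ i⌉ - 4) (⌈(n:ℝ)^t * x₀ i⌉ + 4)).card = 9 := by
      intro i
      rw [Int.card_Icc]
      omega
    simp [this]
  rw [Measure.finset_sum_apply]
  have hlam : ∀ j, (Measure.map (Phi n l q e0 ea gd j) (volume.restrict (Set.Ico (0:ℝ) 1)))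
      (Metric.closedBall x₀ ((n:ℝ)⁻¹^t))
      ≤ ∑ z ∈ Z, volume (Sset n l q e0 ea gd t j z) := by
    intro j
    rw [Measure.map_apply (measurable_Phi hn hD1 hl he0 heaD hgd j)
      measurableSet_closedBall]
    rw [Measure.restrict_apply
      ((measurable_Phi hn hD1 hl he0 heaD hgd j) measurableSet_closedBall)]
    have hsub : (Phi n l q e0 ea gd j) ⁻¹' (Metric.closedBall x₀ ((n:ℝ)⁻¹^t))
        ∩ Set.Ico (0:ℝ) 1 ⊆ ⋃ z ∈ Z, Sset n l q e0 ea gd t j z := by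
      rintro θ ⟨hΦ, hI⟩
      refine Set.mem_biUnion (?_ : (fun i => zI n l q e0 ea gd t j θ i) ∈ Z) ?_
      · rw [hZ, Fintype.mem_piFinset]
        intro i
        rw [Finset.mem_Icc]
        set x := (n:ℝ)^t * x₀ i with hx
        have hpos : (0:ℝ) < (n:ℝ)^t := by positivity
        have hcast := zI_cast hn hD1 hl he0 heaD hgd t j θ i
        have h1 : |posP n l q e0 ea gd t j θ i - Phi n l q e0 ea gd j θ i|
            ≤ 2 * (n:ℝ)⁻¹^t := by
          have := norm_le_pi_norm (posP n l q e0 ea gd t j θ - Phi n l q e0 ea gd j θ) i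
          rw [Pi.sub_apply] at this
          refine this.trans ?_
          rw [← norm_neg, neg_sub]
          exact posP_dist hn hD1 hl he0 heaD hgd t j θ
        have h2 : |Phi n l q e0 ea gd j θ i - x₀ i| ≤ (n:ℝ)⁻¹^t := by
          have hd := dist_le_pi_dist (Phi n l q e0 ea gd j θ) x₀ i
          rw [Real.dist_eq] at hd
          exact hd.trans (Metric.mem_closedBall.1 hΦ)
        have h3 : |(zI n l q e0 ea gd t j θ i : ℝ) - x| ≤ 3 := by
          rw [hcast, hx]
          have hcan : (n:ℝ)^t * posP n l q e0 ea gd t j θ i - (n:ℝ)^t * x₀ i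
              = (n:ℝ)^t * ((posP n l q e0 ea gd t j θ i - Phi n l q e0 ea gd j θ i)
                + (Phi n l q e0 ea gd j θ i - x₀ i)) := by ring
          rw [hcan, abs_mul, abs_of_pos hpos]
          have habs := (abs_add_le (posP n l q e0 ea gd t j θ i - Phi n l q e0 ea gd j θ i)
            (Phi n l q e0 ea gd j θ i - x₀ i))
          have hmul : (n:ℝ)^t * (n:ℝ)⁻¹^t = 1 := by
            rw [← mul_pow, mul_inv_cancel₀ (by positivity : (n:ℝ) ≠ 0), one_pow]
          calc (n:ℝ)^t * |posP n l q e0 ea gd t j θ i - Phi n l q e0 ea gd j θ i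
                + (Phi n l q e0 ea gd j θ i - x₀ i)|
              ≤ (n:ℝ)^t * (3 * (n:ℝ)⁻¹^t) := by
                refine mul_le_mul_of_nonneg_left ?_ hpos.le
                calc _ ≤ _ := habs
                  _ ≤ 2 * (n:ℝ)⁻¹^t + (n:ℝ)⁻¹^t := add_le_add h1 h2
                  _ = 3 * (n:ℝ)⁻¹^t := by ring
            _ = 3 := by rw [show (n:ℝ)^t * (3 * (n:ℝ)⁻¹^t) = 3 * ((n:ℝ)^t * (n:ℝ)⁻¹^t) by ring,
                hmul, mul_one]
        have hceil1 : x ≤ (⌈x⌉ : ℝ) := Int.le_ceil x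
        have hceil2 : (⌈x⌉ : ℝ) < x + 1 := Int.ceil_lt_add_one x
        rw [abs_le] at h3
        constructor
        · have : ((⌈x⌉ - 4 : ℤ) : ℝ) ≤ (zI n l q e0 ea gd t j θ i : ℝ) := by
            push_cast
            linarith
          exact_mod_cast this
        · have : (zI n l q e0 ea gd t j θ i : ℝ) ≤ ((⌈x⌉ + 4 : ℤ) : ℝ) := by
            push_cast
            linarith
          exact_mod_cast this
      · exact ⟨hI, fun i => rfl⟩
    calc volume ((Phi n l q e0 ea gd j) ⁻¹' (Metric.closedBall x₀ ((n:ℝ)⁻¹^t))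
          ∩ Set.Ico (0:ℝ) 1)
        ≤ volume (⋃ z ∈ Z, Sset n l q e0 ea gd t j z) := measure_mono hsub
      _ ≤ ∑ z ∈ Z, volume (Sset n l q e0 ea gd t j z) := measure_biUnion_finset_le Z _
  calc (∑ j ∈ Finset.range (T+1),
        (Measure.map (Phi n l q e0 ea gd j) (volume.restrict (Set.Ico (0:ℝ) 1)))
          (Metric.closedBall x₀ ((n:ℝ)⁻¹^t)))
      ≤ ∑ j ∈ Finset.range (T+1), ∑ z ∈ Z, volume (Sset n l q e0 ea gd t j z) :=
        Finset.sum_le_sum (fun j _ => hlam j)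
    _ = ∑ z ∈ Z, ∑ j ∈ Finset.range (T+1), volume (Sset n l q e0 ea gd t j z) :=
        Finset.sum_comm
    _ ≤ ∑ z ∈ Z, (q : ℝ≥0∞) * ENNReal.ofReal ((l:ℝ)^q * (l:ℝ)⁻¹^t) :=
        Finset.sum_le_sum (fun z _ =>
          sum_over_j hn hD1 hl hq he0 hea hgd he0i heai hg1 ht z)
    _ = (Z.card : ℝ≥0∞) * ((q : ℝ≥0∞) * ENNReal.ofReal ((l:ℝ)^q * (l:ℝ)⁻¹^t)) := by
        rw [Finset.sum_const, nsmul_eq_mul]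
    _ = (9:ℝ≥0∞)^k * q * ENNReal.ofReal ((l:ℝ)^q * (l:ℝ)⁻¹^t) := by
        rw [hcard]
        push_cast
        ring

lemma mass_eq {α : Pt k} (hK1 : IsFractalCube n D1 K1) (hK2 : IsFractalCube n D2 K2)
    (hn : 2 ≤ n) (hD1 : IsDigitSet n D1) (hl : 1 ≤ l) (hq : 1 ≤ q)
    {c : ℕ → Pt k} (hc0 : c 0 = 0) (hcq : c q = α)
    (hFα : (interF K1 K2 α).Nonempty)
    (he0 : ∀ m < l, e0 m ∈ Ga n D1 D2 0) (hea : ∀ m < l, ea m ∈ Ga n D1 D2 α)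
    (hgd : ∀ i < q, gd i ∈ Gab n D1 D2 (c i) (c (i+1)))
    (T : ℕ) :
    (∑ j ∈ Finset.range (T+1),
        Measure.map (Phi n l q e0 ea gd j) (volume.restrict (Set.Ico (0:ℝ) 1)))
      (interF K1 K2 0) = (T+1 : ℕ) := by
  have he0D : ∀ m < l, e0 m ∈ D1 := fun m hm => (he0 m hm).1
  have heaD : ∀ m < l, ea m ∈ D1 := fun m hm => (hea m hm).1
  have hgdD : ∀ i < q, gd i ∈ D1 := fun i hi => (hgd i hi).1
  have hms : MeasurableSet (interF K1 K2 0) :=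
    (interF_isClosed hK1 hK2 0).measurableSet
  rw [Measure.finset_sum_apply]
  have hone : ∀ j, (Measure.map (Phi n l q e0 ea gd j) (volume.restrict (Set.Ico (0:ℝ) 1)))
      (interF K1 K2 0) = 1 := by
    intro j
    rw [Measure.map_apply (measurable_Phi hn hD1 hl he0D heaD hgdD j) hms]
    have hpre : (Phi n l q e0 ea gd j) ⁻¹' (interF K1 K2 0) = Set.univ := by
      refine Set.eq_univ_of_forall (fun θ => ?_)
      exact Phi_mem hK1 hK2 hn hD1 hl hq hc0 hcq hFα he0 hea hgd j θ
    rw [hpre, Measure.restrict_apply MeasurableSet.univ, Set.univ_inter]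
    simp [Real.volume_Ico]
  simp [hone]

end Meas

section Glue

variable {k n : ℕ}

lemma exists_enum {S : Set (Pt k)} {l : ℕ} (hl : 1 ≤ l) (h : S.ncard = l) :
    ∃ e : ℕ → Pt k, (∀ m < l, e m ∈ S) ∧ (∀ m m', m < l → m' < l → e m = e m' → m = m') := by
  classical
  have hfin : S.Finite := by
    by_contra hinf
    rw [Set.Infinite.ncard (by simpa using hinf)] at h
    omega
  have hcard : hfin.toFinset.card = l := by
    rw [← Set.ncard_eq_toFinset_card S hfin, h]
  set eqv := Finset.equivFinOfCardEq hcard with heqv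
  refine ⟨fun m => if hm : m < l then (eqv.symm ⟨m, hm⟩ : Pt k) else 0, ?_, ?_⟩
  · intro m hm
    dsimp only
    rw [dif_pos hm]
    exact hfin.mem_toFinset.1 (eqv.symm ⟨m, hm⟩).2
  · intro m m' hm hm' he
    dsimp only at he
    rw [dif_pos hm, dif_pos hm'] at he
    have h2 := eqv.symm.injective (Subtype.ext he)
    simpa using congrArg Fin.val h2

lemma exists_scale (hn : 2 ≤ n) {δ : ℝ} (hδ0 : 0 < δ) {T : ℕ}
    (hδ : δ ≤ (n:ℝ)⁻¹^(T+1)) :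
    ∃ t : ℕ, T+1 ≤ t ∧ δ ≤ (n:ℝ)⁻¹^t ∧ (n:ℝ)⁻¹^(t+1) < δ := by
  have h1 : (1:ℝ) < n := by exact_mod_cast hn.trans_lt' one_lt_two
  have hb0 : (0:ℝ) < (n:ℝ)⁻¹ := by positivity
  have hb1 : (n:ℝ)⁻¹ < 1 := inv_lt_one_of_one_lt₀ h1
  have hex : ∃ u : ℕ, (n:ℝ)⁻¹^(T+1+u) < δ := by
    obtain ⟨M, hM⟩ := exists_pow_lt_of_lt_one hδ0 hb1
    exact ⟨M, lt_of_le_of_lt (pow_le_pow_of_le_one hb0.le hb1.le (by omega)) hM⟩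
  classical
  have hP := Nat.find_spec hex
  set u₀ := Nat.find hex with hu₀
  have hu0pos : 1 ≤ u₀ := by
    rcases Nat.eq_zero_or_pos u₀ with h0 | h0
    · rw [h0] at hP
      simp only [Nat.add_zero] at hP
      linarith
    · omega
  refine ⟨T + u₀, by omega, ?_, ?_⟩
  · have hmin := Nat.find_min hex (m := u₀ - 1) (by omega)
    push_neg at hmin
    have : T + 1 + (u₀ - 1) = T + u₀ := by omega
    rwa [this] at hmin
  · have : T + u₀ + 1 = T + 1 + u₀ := by omega
    rw [this]
    exact hP

lemma rpow_pow {l : ℕ} (hn : 2 ≤ n) (hl : 1 ≤ l) (m : ℕ) :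
    ((n:ℝ)⁻¹^m) ^ (Real.logb n l) = (l:ℝ)⁻¹^m := by
  have hn0 : (0:ℝ) < n := by positivity
  have hn1 : (n:ℝ) ≠ 1 := by
    have : (2:ℝ) ≤ n := by exact_mod_cast hn
    linarith
  have hl0 : (0:ℝ) < l := by exact_mod_cast hl
  rw [inv_pow, ← Real.rpow_natCast (n:ℝ) m, ← Real.rpow_neg hn0.le,
    ← Real.rpow_mul hn0.le]
  rw [show (-(m:ℝ)) * Real.logb n l = Real.logb n l * (-(m:ℝ)) by ring]
  rw [Real.rpow_mul hn0.le, Real.rpow_logb hn0 hn1 hl0]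
  rw [Real.rpow_neg (by positivity), Real.rpow_natCast, inv_pow]

end Glue

end FC13

/-- if `α ≻ 0`, `#G₀ = #G_α = l ≥ 1` and `#G_β ≤ l` for all `β ≻ 0`,
then `H^s(F₀) = ∞` for `s = log_n l`. -/


theorem measure_interF_infinite {k n : ℕ} (hk : 1 ≤ k) (hn : 2 ≤ n)
    (D1 D2 K1 K2 : Set (Pt k)) (hD1 : IsDigitSet n D1) (hD2 : IsDigitSet n D2)
    (hK1 : IsFractalCube n D1 K1) (hK2 : IsFractalCube n D2 K2)
    (α : Pt k) (hα : IsAk α) (hα0 : α ≠ 0)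
    (hsucc : GSucc n D1 D2 K1 K2 α 0)
    (l : ℕ) (hl : 1 ≤ l)
    (hG0 : (Ga n D1 D2 0).ncard = l) (hGα : (Ga n D1 D2 α).ncard = l)
    (hmax : ∀ β, IsAk β → GSucc n D1 D2 K1 K2 β 0 → (Ga n D1 D2 β).ncard ≤ l) :
    μH[Real.logb n l] (interF K1 K2 0) = ⊤ := by
  classical
  obtain ⟨p, hp, c, hc0, hcp, hak, hsq, hFne, hGne⟩ := hsucc
  set s := Real.logb n l with hs
  have hn1 : (1:ℝ) < n := by exact_mod_cast hn.trans_lt' one_lt_two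
  have hl1 : (1:ℝ) ≤ l := by exact_mod_cast hl
  have hs0 : 0 ≤ s := Real.logb_nonneg hn1 hl1
  -- chain digits
  have hgd_all : ∀ i, ∃ g : Pt k, i < p → g ∈ Gab n D1 D2 (c i) (c (i+1)) := by
    intro i
    by_cases h : i < p
    · exact ⟨(hGne i h).choose, fun _ => (hGne i h).choose_spec⟩
    · exact ⟨0, fun h' => absurd h' h⟩
  choose gd hgd using hgd_all
  have hgdD : ∀ i < p, gd i ∈ D1 := fun i hi => (hgd i hi).1
  -- enumerations
  obtain ⟨e0, he0, he0i⟩ := FC13.exists_enum hl hG0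
  obtain ⟨ea, hea, heai⟩ := FC13.exists_enum hl hGα
  have he0D : ∀ m < l, e0 m ∈ D1 := fun m hm => (he0 m hm).1
  have heaD : ∀ m < l, ea m ∈ D1 := fun m hm => (hea m hm).1
  -- F_alpha nonempty
  have hFα : (interF K1 K2 α).Nonempty := by
    have := hFne p le_rfl
    rwa [hcp] at this
  -- gd 0 is not an alpha-digit
  have hg1 : gd 0 ∉ Ga n D1 D2 α := by
    have hc1ne : c 1 ≠ 0 := by
      have h01 := hsq 0 hp
      rw [hc0] at h01
      exact fun h => h01.2 h.symm
    obtain ⟨i₀, hi₀⟩ : ∃ i, c 1 i ≠ 0 := by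
      by_contra hno
      push_neg at hno
      exact hc1ne (funext hno)
    have hsqle : ∀ m, 1 ≤ m → m ≤ p → c m i₀ = c 1 i₀ := by
      intro m
      induction m with
      | zero => omega
      | succ m ih =>
        intro hm1 hmp
        rcases Nat.eq_or_lt_of_le hm1 with h | h
        · rw [← h]
        · have hm : 1 ≤ m := by omega
          have hih := ih hm (by omega)
          have hstep := (hsq m (by omega)).1
          rw [← hih]
          exact hstep i₀ (by rw [hih]; exact hi₀)
    have hαi₀ : α i₀ = c 1 i₀ := by
      rw [← hcp]
      exact hsqle p (by omega) le_rfl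
    intro hmem
    obtain ⟨_, d2', hd2', heq'⟩ := hmem
    obtain ⟨_, d2, hd2, heq⟩ := hgd 0 hp
    have h1 : gd 0 i₀ = d2 i₀ - c 1 i₀ := by
      have hc := congrFun heq i₀
      simp only [Pi.add_apply, Pi.sub_apply, Pi.smul_apply, smul_eq_mul, hc0,
        Pi.zero_apply, mul_zero, zero_sub] at hc
      linarith [hc]
    have h2 : gd 0 i₀ = d2' i₀ + ((n:ℝ) * α i₀ - α i₀) := by
      have hc := congrFun heq' i₀
      simp only [Pi.add_apply, Pi.sub_apply, Pi.smul_apply, smul_eq_mul] at hc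
      linarith [hc]
    obtain ⟨m2, hm2n, hm2⟩ := hD2.2 d2 hd2 i₀
    obtain ⟨m2', hm2n', hm2'⟩ := hD2.2 d2' hd2' i₀
    have hb2 : (m2:ℝ) ≤ (n:ℝ) - 1 := by
      have : (m2:ℝ) + 1 ≤ n := by exact_mod_cast hm2n
      linarith
    have hb2' : (m2':ℝ) ≤ (n:ℝ) - 1 := by
      have : (m2':ℝ) + 1 ≤ n := by exact_mod_cast hm2n'
      linarith
    have hb2'0 : (0:ℝ) ≤ m2' := by positivity
    have hb20 : (0:ℝ) ≤ m2 := by positivity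
    rcases hak 1 (by omega) i₀ with hob | hob | hob
    · -- c 1 i₀ = -1
      rw [hob] at hαi₀
      rw [hm2, hob] at h1
      rw [hm2', hαi₀] at h2
      rw [h1] at h2
      nlinarith
    · exact hi₀ hob
    · -- c 1 i₀ = 1
      rw [hob] at hαi₀
      rw [hm2, hob] at h1
      rw [hm2', hαi₀] at h2
      rw [h1] at h2
      nlinarith
  -- the branch measures
  set F₀ := interF K1 K2 0 with hF₀
  set μT : ℕ → Measure (Pt k) := fun T => ∑ j ∈ Finset.range (T+1),
    Measure.map (FC13.Phi n l p e0 ea gd j) (volume.restrict (Set.Ico (0:ℝ) 1)) with hμT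
  have hmass : ∀ T : ℕ, μT T F₀ = (T+1 : ℕ) := by
    intro T
    simp only [hμT, hF₀]
    exact FC13.mass_eq hK1 hK2 hn hD1 hl hp hc0 hcp hFα he0 hea hgd T
  have hcube : ∀ T t : ℕ, T + 1 ≤ t → ∀ x₀ : Pt k,
      μT T (Metric.closedBall x₀ ((n:ℝ)⁻¹^t))
        ≤ (9:ℝ≥0∞)^k * p * ENNReal.ofReal ((l:ℝ)^p * (l:ℝ)⁻¹^t) := by
    intro T t ht x₀
    simp only [hμT]
    exact FC13.cube_bound hK1 hK2 hn hD1 hl hp he0D hea hgdD he0i heai hg1 ht x₀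
  -- constants
  set C2 : ℝ≥0∞ := (9:ℝ≥0∞)^k * p * ENNReal.ofReal ((l:ℝ)^(p+1)) with hC2
  have hl0 : (0:ℝ) < l := by linarith
  have hC2ne0 : C2 ≠ 0 := by
    rw [hC2]
    refine mul_ne_zero (mul_ne_zero ?_ ?_) ?_
    · positivity
    · exact Nat.cast_ne_zero.2 hp.ne'
    · rw [Ne, ENNReal.ofReal_eq_zero, not_le]
      positivity
  have hC2top : C2 ≠ ⊤ := by
    rw [hC2]
    refine ENNReal.mul_ne_top (ENNReal.mul_ne_top ?_ ?_) ENNReal.ofReal_ne_top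
    · exact ENNReal.pow_ne_top (by norm_num)
    · exact ENNReal.natCast_ne_top p
  have hofr : ∀ t : ℕ, ENNReal.ofReal ((l:ℝ)^p * (l:ℝ)⁻¹^t)
      = ENNReal.ofReal ((l:ℝ)^(p+1)) * ENNReal.ofReal ((l:ℝ)⁻¹^(t+1)) := by
    intro t
    rw [← ENNReal.ofReal_mul (by positivity)]
    congr 1
    rw [pow_succ, pow_succ]
    have hln0 : (l:ℝ) ≠ 0 := by positivity
    field_simp
  have hcube' : ∀ T t : ℕ, T + 1 ≤ t → ∀ x₀ : Pt k,
      μT T (Metric.closedBall x₀ ((n:ℝ)⁻¹^t))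
        ≤ C2 * ENNReal.ofReal ((l:ℝ)⁻¹^(t+1)) := by
    intro T t ht x₀
    refine (hcube T t ht x₀).trans ?_
    rw [hofr t, hC2]
    ring_nf
    exact le_rfl
  -- inclusion of small sets in balls
  have hball : ∀ (A : Set (Pt k)) (x₀ : Pt k), x₀ ∈ A → ∀ r : ℝ, 0 ≤ r →
      EMetric.diam A ≤ ENNReal.ofReal r → A ⊆ Metric.closedBall x₀ r := by
    intro A x₀ hx₀ r hr hA a ha
    rw [Metric.mem_closedBall]
    have h1 : edist a x₀ ≤ ENNReal.ofReal r := (EMetric.edist_le_diam_of_mem ha hx₀).trans hA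
    rw [edist_dist] at h1
    exact (ENNReal.ofReal_le_ofReal_iff hr).1 h1
  -- the per-set bound
  have hsetB : ∀ T : ℕ, ∀ A : Set (Pt k),
      EMetric.diam A ≤ ENNReal.ofReal ((n:ℝ)⁻¹^(T+1)) →
      μT T A ≤ C2 * ⨆ _ : A.Nonempty, EMetric.diam A ^ s := by
    intro T A hA
    rcases Set.eq_empty_or_nonempty A with hAe | hAne
    · rw [hAe]
      simp
    · rw [iSup_pos hAne]
      obtain ⟨x₀, hx₀⟩ := hAne
      rcases Nat.lt_or_ge l 2 with hl2 | hl2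
      · -- l = 1 : s = 0
        have hleq : l = 1 := by omega
        have hs0' : s = 0 := by
          rw [hs, hleq]
          simp
        rw [hs0', ENNReal.rpow_zero, mul_one]
        have hsub := hball A x₀ hx₀ ((n:ℝ)⁻¹^(T+1)) (by positivity) hA
        refine ((measure_mono hsub).trans (hcube' T (T+1) le_rfl x₀)).trans ?_
        calc C2 * ENNReal.ofReal ((l:ℝ)⁻¹^(T+1+1)) ≤ C2 * 1 := by
              refine mul_le_mul_right ?_ C2
              rw [hleq]
              simp
          _ = C2 := mul_one _
      · -- l ≥ 2
        have hil1 : (l:ℝ)⁻¹ < 1 := by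
          rw [inv_lt_one_iff₀]
          right
          exact_mod_cast by omega
        have hil0 : (0:ℝ) < (l:ℝ)⁻¹ := by positivity
        have hdne : EMetric.diam A ≠ ⊤ :=
          (hA.trans_lt ENNReal.ofReal_lt_top).ne
        set δ := (EMetric.diam A).toReal with hδdef
        have hdiam_eq : EMetric.diam A = ENNReal.ofReal δ := by
          rw [hδdef, ENNReal.ofReal_toReal hdne]
        have hδ0 : 0 ≤ δ := ENNReal.toReal_nonneg
        have hδle : δ ≤ (n:ℝ)⁻¹^(T+1) := by
          have := ENNReal.toReal_mono ENNReal.ofReal_ne_top hA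
          rwa [ENNReal.toReal_ofReal (by positivity)] at this
        rcases eq_or_lt_of_le hδ0 with hδz | hδpos
        · -- diam zero: measure zero
          have hzero : μT T A = 0 := by
            have hbd : ∀ t : ℕ, T + 1 ≤ t → μT T A ≤ C2 * ENNReal.ofReal ((l:ℝ)⁻¹^(t+1)) := by
              intro t ht
              have hsub := hball A x₀ hx₀ ((n:ℝ)⁻¹^t) (by positivity)
                (by rw [hdiam_eq, ← hδz]; simp)
              exact (measure_mono hsub).trans (hcube' T t ht x₀)
            have htendz : Filter.Tendsto (fun t : ℕ => C2 * ENNReal.ofReal ((l:ℝ)⁻¹^(t+1)))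
                Filter.atTop (nhds 0) := by
              have hreal : Filter.Tendsto (fun t : ℕ => (l:ℝ)⁻¹^(t+1)) Filter.atTop (nhds 0) := by
                have hgeo := tendsto_pow_atTop_nhds_zero_of_lt_one hil0.le hil1
                exact hgeo.comp (Filter.tendsto_add_atTop_nat 1)
              have : Filter.Tendsto (fun t : ℕ => ENNReal.ofReal ((l:ℝ)⁻¹^(t+1)))
                  Filter.atTop (nhds 0) := by
                have := (ENNReal.continuous_ofReal.tendsto 0).comp hreal
                simpa [Function.comp_def] using this
              have := ENNReal.Tendsto.const_mul this (Or.inr hC2top)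
              simpa using this
            have hev : ∀ᶠ t : ℕ in Filter.atTop, μT T A ≤ C2 * ENNReal.ofReal ((l:ℝ)⁻¹^(t+1)) :=
              Filter.eventually_atTop.2 ⟨T+1, hbd⟩
            have := ge_of_tendsto htendz hev
            simpa using this
          rw [hzero]
          exact zero_le
        · -- diam positive
          obtain ⟨t, htT, ht1, ht2⟩ := FC13.exists_scale hn hδpos hδle
          have hsub := hball A x₀ hx₀ ((n:ℝ)⁻¹^t) (by positivity)
            (by rw [hdiam_eq]; exact ENNReal.ofReal_le_ofReal ht1)
          refine ((measure_mono hsub).trans (hcube' T t htT x₀)).trans ?_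
          refine mul_le_mul_right ?_ C2
          have hd_rpow : EMetric.diam A ^ s = ENNReal.ofReal (δ ^ s) := by
            rw [hdiam_eq, ← ENNReal.ofReal_rpow_of_pos hδpos]
          rw [hd_rpow]
          refine ENNReal.ofReal_le_ofReal ?_
          have := FC13.rpow_pow (l := l) hn hl (t+1)
          rw [← this]
          rw [← hs]
          exact Real.rpow_le_rpow (by positivity) ht2.le hs0
  -- conclusion via the Hausdorff measure formula
  have hkey : ∀ T : ℕ, ((T:ℝ≥0∞)+1) ≤ C2 * μH[s] F₀ := by
    intro T
    set rT : ℝ≥0∞ := ENNReal.ofReal ((n:ℝ)⁻¹^(T+1)) with hrT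
    have hrT0 : 0 < rT := by
      rw [hrT, ENNReal.ofReal_pos]
      positivity
    have hinf_le : (⨅ (tc : ℕ → Set (Pt k)) (_ : F₀ ⊆ ⋃ nn, tc nn)
        (_ : ∀ nn, EMetric.diam (tc nn) ≤ rT),
          ∑' nn, ⨆ _ : (tc nn).Nonempty, EMetric.diam (tc nn) ^ s) ≤ μH[s] F₀ := by
      rw [MeasureTheory.Measure.hausdorffMeasure_apply]
      exact le_iSup₂ (f := fun (r : ℝ≥0∞) (_ : 0 < r) =>
        ⨅ (tc : ℕ → Set (Pt k)) (_ : F₀ ⊆ ⋃ nn, tc nn)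
          (_ : ∀ nn, EMetric.diam (tc nn) ≤ r),
            ∑' nn, ⨆ _ : (tc nn).Nonempty, EMetric.diam (tc nn) ^ s) rT hrT0
    refine le_trans ?_ (mul_le_mul_right hinf_le C2)
    rw [ENNReal.mul_iInf_of_ne hC2ne0 hC2top]
    refine le_iInf (fun tc => ?_)
    rw [ENNReal.mul_iInf_of_ne hC2ne0 hC2top]
    refine le_iInf (fun hcov => ?_)
    rw [ENNReal.mul_iInf_of_ne hC2ne0 hC2top]
    refine le_iInf (fun hdiam => ?_)
    calc ((T:ℝ≥0∞)+1) = μT T F₀ := by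
          rw [hmass T]
          push_cast
          rfl
      _ ≤ μT T (⋃ nn, tc nn) := measure_mono hcov
      _ ≤ ∑' nn, μT T (tc nn) := measure_iUnion_le tc
      _ ≤ ∑' nn, C2 * ⨆ _ : (tc nn).Nonempty, EMetric.diam (tc nn) ^ s :=
          ENNReal.tsum_le_tsum (fun nn => hsetB T (tc nn) (hdiam nn))
      _ = C2 * ∑' nn, ⨆ _ : (tc nn).Nonempty, EMetric.diam (tc nn) ^ s :=
          ENNReal.tsum_mul_left
  by_contra hne
  obtain ⟨N, hN⟩ := ENNReal.exists_nat_gt (ENNReal.mul_ne_top hC2top hne)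
  have := (hkey N).trans_lt hN
  have hNN : ((N:ℝ≥0∞)+1) = ((N+1 : ℕ) : ℝ≥0∞) := by push_cast; ring
  rw [hNN] at this
  have hfin : (N+1 : ℕ) < N := by exact_mod_cast this
  omega
end
end

section
/- Let K_1, K_2 be fractal k-cubes of order n with digit sets D_1, D_2 and let α ∈ A_k. If there exists β ≽ α with #G_β ≥ 2, then F_α = K_1 ∩ (K_2 + α) is uncountable. -/
open Set Pointwise MeasureTheory

noncomputable section

/-! ### Auxiliary lemmas for Statement 17 -/

section AuxSeventeen

variable {k n : ℕ}

lemma aux_not_countable_seq : ¬ Countable (ℕ → Bool) := by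
  intro h
  have h1 : Cardinal.mk (ℕ → Bool) ≤ Cardinal.aleph0 := Cardinal.mk_le_aleph0
  rw [Cardinal.mk_arrow, Cardinal.mk_bool, Cardinal.mk_nat, Cardinal.lift_id,
    Cardinal.lift_id] at h1
  exact absurd h1 (Cardinal.cantor _).not_ge

lemma aux_smul_mem_of_mem_smul {s : Set (Pt k)} {x : Pt k} (hn0 : (n : ℝ) ≠ 0)
    (hx : x ∈ (n : ℝ) • s) : (n : ℝ)⁻¹ • x ∈ s := by
  obtain ⟨y, hy, rfl⟩ := hx
  rwa [smul_smul, inv_mul_cancel₀ hn0, one_smul]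

lemma aux_Sdig_mem {D K : Set (Pt k)} (hn0 : (n : ℝ) ≠ 0) (hK : IsFractalCube n D K)
    {d x : Pt k} (hd : d ∈ D) (hx : x ∈ K) : Sdig n d x ∈ K := by
  have h1 : x + d ∈ (n : ℝ) • K := by
    rw [hK.2.2]; exact Set.add_mem_add hx hd
  exact aux_smul_mem_of_mem_smul hn0 h1

lemma aux_Sdig_injective (hn0 : (n : ℝ) ≠ 0) (d : Pt k) :
    Function.Injective (Sdig n d) := by
  intro x y h
  have h2 := smul_right_injective (Pt k) (inv_ne_zero hn0) h
  exact add_right_cancel h2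

lemma aux_Sdig_maps (hn0 : (n : ℝ) ≠ 0) {D1 D2 K1 K2 : Set (Pt k)}
    (hK1 : IsFractalCube n D1 K1) (hK2 : IsFractalCube n D2 K2)
    {a b d : Pt k} (hd : d ∈ Gab n D1 D2 a b) :
    Set.MapsTo (Sdig n d) (interF K1 K2 b) (interF K1 K2 a) := by
  obtain ⟨hd1, d2, hd2, hdeq⟩ := hd
  rintro x ⟨hx1, y, hy, rfl⟩
  have hdi : ∀ i, d i = d2 i + ((n : ℝ) * a i - b i) := by
    intro i
    rw [← hdeq]
    simp [Pi.add_apply, Pi.sub_apply, Pi.smul_apply, smul_eq_mul]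
  refine ⟨aux_Sdig_mem hn0 hK1 hd1 hx1, (n : ℝ)⁻¹ • (y + d2), aux_Sdig_mem hn0 hK2 hd2 hy, ?_⟩
  funext i
  simp only [Sdig, Pi.add_apply, Pi.smul_apply, smul_eq_mul, hdi i]
  field_simp
  ring

/-- Iterated application of the maps `x ↦ q • x + t b` along a boolean sequence. -/
def aux_iterSeq {k : ℕ} (x0 : Pt k) (q : ℝ) (t : Bool → Pt k) : ℕ → (ℕ → Bool) → Pt k
  | 0, _ => x0
  | (m + 1), σ => q • (aux_iterSeq x0 q t m (fun j => σ (j + 1))) + t (σ 0)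

lemma aux_iterSeq_mem {C : Set (Pt k)} {x0 : Pt k} (hx0 : x0 ∈ C) {q : ℝ}
    (t : Bool → Pt k) (hT : ∀ b : Bool, ∀ x ∈ C, q • x + t b ∈ C) :
    ∀ m (σ : ℕ → Bool), aux_iterSeq x0 q t m σ ∈ C := by
  intro m
  induction m with
  | zero => intro σ; exact hx0
  | succ m ih => intro σ; exact hT (σ 0) _ (ih _)

lemma aux_iterSeq_eq (x0 : Pt k) (q : ℝ) (t : Bool → Pt k) :
    ∀ m (σ : ℕ → Bool), aux_iterSeq x0 q t m σ =
      q ^ m • x0 + ∑ j ∈ Finset.range m, q ^ j • t (σ j) := by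
  intro m
  induction m with
  | zero => intro σ; simp [aux_iterSeq]
  | succ m ih =>
    intro σ
    rw [Finset.sum_range_succ']
    show q • (aux_iterSeq x0 q t m (fun j => σ (j + 1))) + t (σ 0) = _
    rw [ih]
    rw [smul_add, Finset.smul_sum, smul_smul, ← pow_succ']
    simp only [smul_smul, ← pow_succ']
    rw [pow_zero, one_smul]
    abel

lemma aux_summable {q : ℝ} (hq0 : 0 ≤ q) (hq1 : q < 1) (t : Bool → Pt k) (σ : ℕ → Bool) :
    Summable (fun j : ℕ => q ^ j • t (σ j)) := by
  apply Summable.of_norm_bounded (g := fun j : ℕ => q ^ j * max ‖t true‖ ‖t false‖)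
    ((summable_geometric_of_lt_one hq0 hq1).mul_right _)
  intro j
  rw [norm_smul, Real.norm_eq_abs, abs_pow, abs_of_nonneg hq0]
  gcongr
  cases h : σ j
  · exact le_max_right _ _
  · exact le_max_left _ _

/-- Core lemma: limits of iterated contractions stay in a closed invariant set. -/
lemma aux_tsum_mem {C : Set (Pt k)} (hC : IsClosed C) {x0 : Pt k} (hx0 : x0 ∈ C)
    {q : ℝ} (hq0 : 0 ≤ q) (hq1 : q < 1) (t : Bool → Pt k)
    (hT : ∀ b : Bool, ∀ x ∈ C, q • x + t b ∈ C) (σ : ℕ → Bool) :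
    (∑' j : ℕ, q ^ j • t (σ j)) ∈ C := by
  have hsum := aux_summable hq0 hq1 t σ
  have h1 : Filter.Tendsto (fun m => ∑ j ∈ Finset.range m, q ^ j • t (σ j))
      Filter.atTop (nhds (∑' j : ℕ, q ^ j • t (σ j))) := hsum.hasSum.tendsto_sum_nat
  have h2 : Filter.Tendsto (fun m : ℕ => q ^ m • x0) Filter.atTop (nhds 0) := by
    have := (tendsto_pow_atTop_nhds_zero_of_lt_one hq0 hq1).smul_const x0
    rwa [zero_smul] at this
  have h3 : Filter.Tendsto (fun m => aux_iterSeq x0 q t m σ) Filter.atTop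
      (nhds (∑' j : ℕ, q ^ j • t (σ j))) := by
    have h4 := h2.add h1
    rw [zero_add] at h4
    refine h4.congr fun m => ?_
    rw [aux_iterSeq_eq]
  exact hC.mem_of_tendsto h3
    (Filter.Eventually.of_forall fun m => aux_iterSeq_mem hx0 t hT m σ)

lemma aux_tsum_injective {q : ℝ} (hq0 : 0 < q) (hq2 : q < 1 / 2) (t : Bool → Pt k)
    {i : Fin k} (hti : t true i ≠ t false i) :
    Function.Injective (fun σ : ℕ → Bool => ∑' j : ℕ, q ^ j • t (σ j)) := by
  have hq1 : q < 1 := by linarith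
  have key : ∀ ρ : ℕ → Bool, (∑' j : ℕ, q ^ j • t (ρ j)) i =
      (∑' j : ℕ, q ^ j * t false i) +
        (t true i - t false i) * Cardinal.cantorFunction q ρ := by
    intro ρ
    rw [tsum_apply (aux_summable hq0.le hq1 t ρ)]
    rw [Cardinal.cantorFunction, ← tsum_mul_left]
    rw [← Summable.tsum_add (((summable_geometric_of_lt_one hq0.le hq1)).mul_right _)
      ((Cardinal.summable_cantor_function ρ hq0.le hq1).mul_left _)]
    refine tsum_congr fun j => ?_
    cases h : ρ j
    · simp [Cardinal.cantorFunctionAux, h, Pi.smul_apply, smul_eq_mul]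
    · simp only [Pi.smul_apply, smul_eq_mul, Cardinal.cantorFunctionAux, h, cond_true]
      ring
  intro σ τ h
  have h' : (∑' j : ℕ, q ^ j • t (σ j)) = ∑' j : ℕ, q ^ j • t (τ j) := h
  have hi := congrFun h' i
  rw [key σ, key τ] at hi
  have h5 : (t true i - t false i) * Cardinal.cantorFunction q σ =
      (t true i - t false i) * Cardinal.cantorFunction q τ := by linarith
  have h6 := mul_left_cancel₀ (sub_ne_zero.mpr hti) h5
  exact Cardinal.cantorFunction_injective hq0 hq2 h6

lemma aux_chain_inject (hn0 : (n : ℝ) ≠ 0) {D1 D2 K1 K2 : Set (Pt k)}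
    (hK1 : IsFractalCube n D1 K1) (hK2 : IsFractalCube n D2 K2) {α β : Pt k}
    (hs : GSuccEq n D1 D2 K1 K2 β α) :
    ∃ ψ : Pt k → Pt k, Function.Injective ψ ∧
      Set.MapsTo ψ (interF K1 K2 β) (interF K1 K2 α) := by
  rcases hs with ⟨p, hp, c, hc0, hcp, _, _, _, hGc⟩ | rfl
  · have main : ∀ m, m ≤ p → ∃ ψ : Pt k → Pt k, Function.Injective ψ ∧
        Set.MapsTo ψ (interF K1 K2 β) (interF K1 K2 (c (p - m))) := by
      intro m
      induction m with
      | zero =>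
        intro _
        refine ⟨id, Function.injective_id, ?_⟩
        simp only [Nat.sub_zero, hcp]
        exact Set.mapsTo_id _
      | succ m ih =>
        intro hm
        obtain ⟨ψ, hinj, hmaps⟩ := ih (Nat.le_of_succ_le hm)
        obtain ⟨d, hd⟩ := hGc (p - (m + 1)) (by omega)
        have heq : p - (m + 1) + 1 = p - m := by omega
        refine ⟨Sdig n d ∘ ψ, (aux_Sdig_injective hn0 d).comp hinj, ?_⟩
        have h7 : Set.MapsTo (Sdig n d) (interF K1 K2 (c (p - m)))
            (interF K1 K2 (c (p - (m + 1)))) := by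
          rw [← heq]
          exact aux_Sdig_maps hn0 hK1 hK2 hd
        exact h7.comp hmaps
    obtain ⟨ψ, h1, h2⟩ := main p le_rfl
    rw [Nat.sub_self, hc0] at h2
    exact ⟨ψ, h1, h2⟩
  · exact ⟨id, Function.injective_id, Set.mapsTo_id _⟩

lemma aux_interF_closed {K1 K2 : Set (Pt k)} (h1 : IsCompact K1) (h2 : IsCompact K2)
    (β : Pt k) : IsClosed (interF K1 K2 β) :=
  h1.isClosed.inter ((h2.image (continuous_id.add continuous_const)).isClosed)

end AuxSeventeen


lemma aux_Fbeta_nonempty (hn : 2 ≤ n) {D1 D2 K1 K2 : Set (Pt k)}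
    (hK1 : IsFractalCube n D1 K1) (hK2 : IsFractalCube n D2 K2)
    {β g : Pt k} (hg : g ∈ Ga n D1 D2 β) : (interF K1 K2 β).Nonempty := by
  have hnR : (2 : ℝ) ≤ (n : ℝ) := by exact_mod_cast hn
  have hn0 : (n : ℝ) ≠ 0 := by linarith
  obtain ⟨hg1, d2, hd2, hdeq⟩ := hg
  have hq0 : (0 : ℝ) ≤ (n : ℝ)⁻¹ := by positivity
  have hq1 : (n : ℝ)⁻¹ < 1 := by
    rw [inv_lt_one_iff₀]; right; linarith
  have hT1 : ∀ b : Bool, ∀ x ∈ K1, (n : ℝ)⁻¹ • x + (n : ℝ)⁻¹ • g ∈ K1 := by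
    intro b x hx
    rw [← smul_add]
    exact aux_Sdig_mem hn0 hK1 hg1 hx
  have hT2 : ∀ b : Bool, ∀ x ∈ K2, (n : ℝ)⁻¹ • x + (n : ℝ)⁻¹ • d2 ∈ K2 := by
    intro b x hx
    rw [← smul_add]
    exact aux_Sdig_mem hn0 hK2 hd2 hx
  obtain ⟨y1, hy1⟩ := hK1.1
  obtain ⟨y2, hy2⟩ := hK2.1
  have hp1 : (∑' j : ℕ, ((n : ℝ)⁻¹) ^ j • ((n : ℝ)⁻¹ • g)) ∈ K1 :=
    aux_tsum_mem hK1.2.1.isClosed hy1 hq0 hq1 (fun _ => (n : ℝ)⁻¹ • g) hT1 (fun _ => true)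
  have hp2 : (∑' j : ℕ, ((n : ℝ)⁻¹) ^ j • ((n : ℝ)⁻¹ • d2)) ∈ K2 :=
    aux_tsum_mem hK2.2.1.isClosed hy2 hq0 hq1 (fun _ => (n : ℝ)⁻¹ • d2) hT2 (fun _ => true)
  have hsum := summable_geometric_of_lt_one hq0 hq1
  have hc : ∀ v : Pt k, (∑' j : ℕ, ((n : ℝ)⁻¹) ^ j • ((n : ℝ)⁻¹ • v)) =
      ((1 - (n : ℝ)⁻¹)⁻¹ * (n : ℝ)⁻¹) • v := by
    intro v
    rw [hsum.tsum_smul_const, tsum_geometric_of_lt_one hq0 hq1, smul_smul]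
  refine ⟨∑' j : ℕ, ((n : ℝ)⁻¹) ^ j • ((n : ℝ)⁻¹ • g), hp1,
    ∑' j : ℕ, ((n : ℝ)⁻¹) ^ j • ((n : ℝ)⁻¹ • d2), hp2, ?_⟩
  rw [hc, hc]
  funext i
  have hgi : d2 i + ((n : ℝ) * β i - β i) = g i := by
    have := congrFun hdeq i
    simpa [Pi.add_apply, Pi.sub_apply, Pi.smul_apply, smul_eq_mul] using this
  simp only [Pi.add_apply, Pi.smul_apply, smul_eq_mul, ← hgi]
  have hn1 : (n : ℝ) - 1 ≠ 0 := by linarith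
  field_simp

/-- if some `β ≽ α` has `#G_β ≥ 2`, then `F_α` is uncountable. -/
theorem interF_uncountable {k n : ℕ} (hk : 1 ≤ k) (hn : 2 ≤ n)
    (D1 D2 K1 K2 : Set (Pt k)) (hD1 : IsDigitSet n D1) (hD2 : IsDigitSet n D2)
    (hK1 : IsFractalCube n D1 K1) (hK2 : IsFractalCube n D2 K2)
    (α : Pt k) (hα : IsAk α)
    (hG : ∃ β, IsAk β ∧ GSuccEq n D1 D2 K1 K2 β α ∧ 2 ≤ (Ga n D1 D2 β).ncard) :
    ¬(interF K1 K2 α).Countable := by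
  obtain ⟨β, hβAk, hsucc, hcard⟩ := hG
  have hnR : (2 : ℝ) ≤ (n : ℝ) := by exact_mod_cast hn
  have hn0 : (n : ℝ) ≠ 0 := by linarith
  -- two distinct elements of `G_β`
  have hfin : (Ga n D1 D2 β).Finite := by
    by_contra hinf
    rw [Set.Infinite.ncard hinf] at hcard
    omega
  obtain ⟨g, hg, g', hg', hgg'⟩ := (Set.one_lt_ncard hfin).mp (by omega)
  -- `F_β` is nonempty
  have hβne : (interF K1 K2 β).Nonempty := by
    rcases hsucc with hchain | heq
    · obtain ⟨p, hp, c, hc0, hcp, _, _, hF, _⟩ := hchain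
      have := hF p le_rfl
      rwa [hcp] at this
    · rw [heq]; rw [heq] at hg
      exact aux_Fbeta_nonempty hn hK1 hK2 hg
  obtain ⟨x0, hx0⟩ := hβne
  -- the two contraction maps of ratio `1/n²`
  set q1 : ℝ := (n : ℝ)⁻¹ with hq1def
  have hq10 : 0 < q1 := by rw [hq1def]; positivity
  have hq1half : q1 ≤ 1 / 2 := by
    rw [hq1def]
    rw [inv_le_comm₀ (by linarith) (by norm_num)]
    norm_num; linarith
  set q : ℝ := q1 * q1 with hqdef
  have hq0 : 0 < q := mul_pos hq10 hq10
  have hq2 : q < 1 / 2 := by nlinarith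
  have hq1lt : q < 1 := by linarith
  set e : Bool → Pt k := fun b => bif b then g else g' with hedef
  set t : Bool → Pt k := fun b => q • e (!b) + q1 • e b with htdef
  have hGab : ∀ b : Bool, e b ∈ Gab n D1 D2 β β := by
    intro b
    cases b
    · exact hg'
    · exact hg
  have hT : ∀ b : Bool, ∀ x ∈ interF K1 K2 β, q • x + t b ∈ interF K1 K2 β := by
    intro b x hx
    have h1 := aux_Sdig_maps hn0 hK1 hK2 (hGab (!b)) hx
    have h2 := aux_Sdig_maps hn0 hK1 hK2 (hGab b) h1
    have h3 : q • x + t b = Sdig n (e b) (Sdig n (e (!b)) x) := by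
      funext i
      simp only [Sdig, htdef, hqdef, hq1def, Pi.add_apply, Pi.smul_apply, smul_eq_mul]
      ring
    rw [h3]
    exact h2
  set Φ : (ℕ → Bool) → Pt k := fun σ => ∑' j : ℕ, q ^ j • t (σ j) with hΦdef
  have hΦmem : ∀ σ, Φ σ ∈ interF K1 K2 β := fun σ =>
    aux_tsum_mem (aux_interF_closed hK1.2.1 hK2.2.1 β) hx0 hq0.le hq1lt t hT σ
  obtain ⟨i, hi⟩ := Function.ne_iff.mp hgg'
  have hti : t true i ≠ t false i := by
    intro h
    apply hi
    have he1 : e true = g := rfl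
    have he2 : e false = g' := rfl
    rw [htdef] at h
    simp only [Bool.not_true, Bool.not_false, he1, he2, Pi.add_apply, Pi.smul_apply,
      smul_eq_mul] at h
    have hlt : q < q1 := by nlinarith
    have h5 : (q1 - q) * (g i - g' i) = 0 := by linarith
    rcases mul_eq_zero.mp h5 with h6 | h6
    · linarith
    · exact sub_eq_zero.mp h6
  have hΦinj : Function.Injective Φ := aux_tsum_injective hq0 hq2 t hti
  obtain ⟨ψ, hψinj, hψmaps⟩ := aux_chain_inject hn0 hK1 hK2 hsucc
  intro hcount
  have hsub : Set.range (fun σ : ℕ → Bool => ψ (Φ σ)) ⊆ interF K1 K2 α := by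
    rintro _ ⟨σ, rfl⟩
    exact hψmaps (hΦmem σ)
  have hcnt2 : (Set.range (fun σ : ℕ → Bool => ψ (Φ σ))).Countable := hcount.mono hsub
  have hinj2 : Function.Injective (fun σ : ℕ → Bool => ψ (Φ σ)) := fun a b hab =>
    hΦinj (hψinj hab)
  have hC : Countable (ℕ → Bool) := by
    haveI := hcnt2.to_subtype
    exact Countable.of_equiv _ (Equiv.ofInjective _ hinj2).symm
  exact aux_not_countable_seq hC
end
end

section
/- Let K be the fractal k-cube of order n with digit set D, and consider the sets F_α, G_α, G_{αβ} formed with K_1 = K_2 = K (so D_1 = D_2 = D). Then K has the finite intersection property — i.e., for every nonzero α ∈ A_k, the set F_α = K ∩ (K + α) is finite — if and only if every nonzero α ∈ A_k that is a maximal vertex of the structure graph (F_α ≠ ∅ and there is no β with β ≻ α) satisfies #G_α = 1, and every other nonzero α ∈ A_k with F_α ≠ ∅ satisfies G_α = ∅. -/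
open Set Pointwise MeasureTheory

noncomputable section

section Aux

variable {k n : ℕ} {D K : Set (Pt k)}

lemma mem_interF {K1 K2 : Set (Pt k)} {α x : Pt k} :
    x ∈ interF K1 K2 α ↔ x ∈ K1 ∧ ∃ w ∈ K2, w + α = x := Iff.rfl

lemma mem_Gab {D1 D2 : Set (Pt k)} {α β d : Pt k} :
    d ∈ Gab n D1 D2 α β ↔ d ∈ D1 ∧ ∃ e ∈ D2, e + ((n:ℝ) • α - β) = d := Iff.rfl

lemma add_mem_scale (hEq : (n:ℝ) • K = K + D) {y d : Pt k} (hy : y ∈ K) (hd : d ∈ D) :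
    ∃ u ∈ K, (n:ℝ) • u = y + d := by
  have : y + d ∈ (n:ℝ) • K := hEq ▸ Set.add_mem_add hy hd
  exact Set.mem_smul_set.mp this

lemma scale_mem_add (hEq : (n:ℝ) • K = K + D) {x : Pt k} (hx : x ∈ K) :
    ∃ y ∈ K, ∃ d ∈ D, y + d = (n:ℝ) • x :=
  Set.mem_add.mp (hEq ▸ smul_mem_smul_set hx)

lemma digit_coord (hn : 2 ≤ n) {d : Pt k} (hd : IsDigit n d) (i : Fin k) :
    0 ≤ d i ∧ d i ≤ (n:ℝ) - 1 := by
  obtain ⟨m, hm, he⟩ := hd i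
  have h1 : (m:ℝ) + 1 ≤ (n:ℝ) := by exact_mod_cast hm
  constructor
  · rw [he]; positivity
  · rw [he]; linarith

lemma cube_subset_unit (hn : 2 ≤ n) (hD : IsDigitSet n D) (hK : IsFractalCube n D K) :
    K ⊆ unitCube k := by
  obtain ⟨hKne, hKc, hEq⟩ := hK
  have hn1 : (1:ℝ) < (n:ℝ) := by exact_mod_cast hn.trans_lt' one_lt_two
  intro x hx i
  constructor
  · obtain ⟨x₀, hx₀K, hmin⟩ := hKc.exists_isMinOn hKne ((continuous_apply i).continuousOn)
    obtain ⟨y, hyK, d, hdD, hyd⟩ := scale_mem_add hEq hx₀K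
    have hcoord : y i + d i = (n:ℝ) * x₀ i := by
      have := congrFun hyd i; simpa using this
    have hdi := digit_coord hn (hD.2 d hdD) i
    have hyi : x₀ i ≤ y i := hmin hyK
    have hx₀ : 0 ≤ x₀ i := by nlinarith
    exact hx₀.trans (hmin hx)
  · obtain ⟨x₀, hx₀K, hmax⟩ := hKc.exists_isMaxOn hKne ((continuous_apply i).continuousOn)
    obtain ⟨y, hyK, d, hdD, hyd⟩ := scale_mem_add hEq hx₀K
    have hcoord : y i + d i = (n:ℝ) * x₀ i := by
      have := congrFun hyd i; simpa using this
    have hdi := digit_coord hn (hD.2 d hdD) i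
    have hyi : y i ≤ x₀ i := hmax hyK
    have hx₀ : x₀ i ≤ 1 := by nlinarith
    exact (hmax hx).trans hx₀

lemma Sdig_maps (hn : 2 ≤ n) (hEq : (n:ℝ) • K = K + D) {α β d : Pt k}
    (hd : d ∈ Gab n D D α β) {z : Pt k} (hz : z ∈ interF K K β) :
    Sdig n d z ∈ interF K K α := by
  have hn0 : (n:ℝ) ≠ 0 := by positivity
  obtain ⟨hdD, e, heD, hede⟩ := mem_Gab.mp hd
  obtain ⟨hzK, w, hwK, hwz⟩ := mem_interF.mp hz
  obtain ⟨u, huK, hu⟩ := add_mem_scale hEq hzK hdD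
  obtain ⟨v, hvK, hv⟩ := add_mem_scale hEq hwK heD
  have hSu : Sdig n d z = u := by rw [Sdig, ← hu, inv_smul_smul₀ hn0]
  refine mem_interF.mpr ⟨hSu ▸ huK, v, hvK, ?_⟩
  rw [hSu]
  have h1 : (n:ℝ) • (v + α) = z + d := by
    rw [smul_add, hv, ← hwz, ← hede]; module
  exact smul_right_injective (Pt k) hn0 (h1.trans hu.symm)


lemma int_pm (a : ℤ) (h1 : (-1:ℝ) ≤ (a:ℝ)) (h2 : (a:ℝ) ≤ 1) :
    ((a:ℝ) = -1 ∨ (a:ℝ) = 0 ∨ (a:ℝ) = 1) := by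
  have hl : -1 ≤ a := by exact_mod_cast h1
  have hr : a ≤ 1 := by exact_mod_cast h2
  interval_cases a <;> simp

/-- The decomposition lemma: every point of `n F_α` lies in some `F_β + d`
with `α ⊑ β ∈ A_k` and `d ∈ G_{αβ}`. -/
lemma decomp (hn : 2 ≤ n) (hD : IsDigitSet n D) (hK : IsFractalCube n D K)
    {α x : Pt k} (hα : IsAk α) (hx : x ∈ interF K K α) :
    ∃ β y d, IsAk β ∧ SqLe α β ∧ y ∈ interF K K β ∧ d ∈ Gab n D D α β ∧
      (n:ℝ) • x = y + d := by
  have hEq := hK.2.2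
  have hsub := cube_subset_unit hn hD hK
  obtain ⟨hxK, w, hwK, hwx⟩ := mem_interF.mp hx
  obtain ⟨y, hyK, d, hdD, hyd⟩ := scale_mem_add hEq hxK
  obtain ⟨y', hy'K, d', hd'D, hy'd'⟩ := scale_mem_add hEq hwK
  set β : Pt k := d' + (n:ℝ) • α - d with hβ
  have hyy' : y' + β = y := by
    have h1 : y + d = (n:ℝ) • w + (n:ℝ) • α := by rw [hyd, ← hwx]; module
    have h2 : y' + d' = (n:ℝ) • w := hy'd'
    rw [← h2] at h1
    funext i
    have h1i := congrFun h1 i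
    simp only [hβ, Pi.add_apply, Pi.sub_apply, Pi.smul_apply, smul_eq_mul] at h1i ⊢
    linarith
  -- coordinate facts
  have hcoord : ∀ i, β i = d' i + (n:ℝ) * α i - d i := by
    intro i; simp [hβ]
  have hybd : ∀ i, -1 ≤ β i ∧ β i ≤ 1 := by
    intro i
    have h1 := hsub hyK i
    have h2 := hsub hy'K i
    have h3 : y' i + β i = y i := by have := congrFun hyy' i; simpa using this
    constructor <;> linarith
  have hdig : ∀ i, ∃ m m' : ℕ, m < n ∧ m' < n ∧ d i = (m:ℝ) ∧ d' i = (m':ℝ) := by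
    intro i
    obtain ⟨m, hm, he⟩ := hD.2 d hdD i
    obtain ⟨m', hm', he'⟩ := hD.2 d' hd'D i
    exact ⟨m, m', hm, hm', he, he'⟩
  have hβAk : IsAk β := by
    intro i
    obtain ⟨m, m', hm, hm', he, he'⟩ := hdig i
    obtain ⟨hl, hr⟩ := hybd i
    rcases hα i with h | h | h
    · have hc : β i = (((m':ℤ) - m - n : ℤ) : ℝ) := by
        rw [hcoord i, h, he, he']; push_cast; ring
      rw [hc] at hl hr ⊢; exact int_pm _ hl hr
    · have hc : β i = (((m':ℤ) - m : ℤ) : ℝ) := by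
        rw [hcoord i, h, he, he']; push_cast; ring
      rw [hc] at hl hr ⊢; exact int_pm _ hl hr
    · have hc : β i = (((m':ℤ) - m + n : ℤ) : ℝ) := by
        rw [hcoord i, h, he, he']; push_cast; ring
      rw [hc] at hl hr ⊢; exact int_pm _ hl hr
  have hle : SqLe α β := by
    intro i hi
    obtain ⟨m, m', hm, hm', he, he'⟩ := hdig i
    obtain ⟨hl, hr⟩ := hybd i
    have hmr : (m:ℝ) + 1 ≤ (n:ℝ) := by exact_mod_cast hm
    have hm'r : (m':ℝ) + 1 ≤ (n:ℝ) := by exact_mod_cast hm'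
    have hm0 : (0:ℝ) ≤ (m:ℝ) := by positivity
    have hm'0 : (0:ℝ) ≤ (m':ℝ) := by positivity
    have hc := hcoord i
    rcases hα i with h | h | h
    · rw [h]; rw [h, he, he'] at hc; linarith
    · exact absurd h hi
    · rw [h]; rw [h, he, he'] at hc; linarith
  refine ⟨β, y, d, hβAk, hle, mem_interF.mpr ⟨hyK, y', hy'K, hyy'⟩, ?_, hyd.symm⟩
  refine mem_Gab.mpr ⟨hdD, d', hd'D, ?_⟩
  rw [hβ]; module


lemma subsingleton_of_contract (hn : 2 ≤ n) {F : Set (Pt k)}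
    (hB : ∀ x ∈ F, ∀ i, 0 ≤ x i ∧ x i ≤ 1) {d : Pt k}
    (h : ∀ x ∈ F, ∃ u ∈ F, (n:ℝ) • x = u + d) : F.Subsingleton := by
  have hn1 : (1:ℝ) < (n:ℝ) := by exact_mod_cast hn.trans_lt' one_lt_two
  have key : ∀ m : ℕ, ∀ x ∈ F, ∀ y ∈ F, ∃ u ∈ F, ∃ v ∈ F,
      ∀ i, (n:ℝ)^m * (x i - y i) = u i - v i := by
    intro m
    induction m with
    | zero => intro x hx y hy; exact ⟨x, hx, y, hy, fun i => by ring⟩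
    | succ m ih =>
      intro x hx y hy
      obtain ⟨u, hu, v, hv, heq⟩ := ih x hx y hy
      obtain ⟨u', hu', hu'e⟩ := h u hu
      obtain ⟨v', hv', hv'e⟩ := h v hv
      refine ⟨u', hu', v', hv', fun i => ?_⟩
      have h1 : (n:ℝ) * u i = u' i + d i := by
        have := congrFun hu'e i; simpa using this
      have h2 : (n:ℝ) * v i = v' i + d i := by
        have := congrFun hv'e i; simpa using this
      have h3 := heq i
      have : (n:ℝ)^(m+1) * (x i - y i) = (n:ℝ) * ((n:ℝ)^m * (x i - y i)) := by ring
      rw [this, h3]; linarith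
  intro x hx y hy
  funext i
  by_contra hne
  have hpos : 0 < |x i - y i| := abs_pos.mpr (sub_ne_zero.mpr hne)
  obtain ⟨m, hm⟩ := pow_unbounded_of_one_lt (|x i - y i|⁻¹) hn1
  obtain ⟨u, hu, v, hv, heq⟩ := key m x hx y hy
  have hb1 := hB u hu i
  have hb2 := hB v hv i
  have habs : (n:ℝ)^m * |x i - y i| = |u i - v i| := by
    rw [← abs_of_nonneg (a := (n:ℝ)^m) (by positivity), ← abs_mul, heq i]
  have h1 : |u i - v i| ≤ 1 := by rw [abs_le]; constructor <;> linarith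
  have h2 : (1:ℝ) < (n:ℝ)^m * |x i - y i| := by
    rw [← inv_mul_cancel₀ (ne_of_gt hpos)]
    exact mul_lt_mul_of_pos_right hm hpos
  linarith

lemma Sdig_injective (hn : 2 ≤ n) (d : Pt k) : Function.Injective (Sdig n d) := by
  have hn0 : (n:ℝ)⁻¹ ≠ 0 := by positivity
  intro a b hab
  have := smul_right_injective (Pt k) hn0 hab
  exact add_right_cancel this

lemma invariant_singleton (hn : 2 ≤ n) {F : Set (Pt k)}
    (hB : ∀ x ∈ F, ∀ i, 0 ≤ x i ∧ x i ≤ 1) (hF : F.Finite) (hne : F.Nonempty)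
    {d : Pt k} (hmaps : ∀ z ∈ F, Sdig n d z ∈ F) :
    ∃ x₀, F = {x₀} ∧ (n:ℝ) • x₀ = x₀ + d := by
  have hn0 : (n:ℝ) ≠ 0 := by positivity
  have himg : Sdig n d '' F ⊆ F := by rintro _ ⟨z, hz, rfl⟩; exact hmaps z hz
  have heq : Sdig n d '' F = F :=
    Set.eq_of_subset_of_ncard_le himg
      (le_of_eq (Set.ncard_image_of_injective F (Sdig_injective hn d)).symm) hF
  have hcon : ∀ x ∈ F, ∃ u ∈ F, (n:ℝ) • x = u + d := by
    intro x hx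
    rw [← heq] at hx
    obtain ⟨u, hu, rfl⟩ := hx
    exact ⟨u, hu, by rw [Sdig, smul_inv_smul₀ hn0]⟩
  have hss := subsingleton_of_contract hn hB hcon
  obtain ⟨x₀, hx₀⟩ := hne
  refine ⟨x₀, hss.eq_singleton_of_mem hx₀, ?_⟩
  have hfix : Sdig n d x₀ = x₀ := hss (hmaps x₀ hx₀) hx₀
  have h2 : (n:ℝ) • ((n:ℝ)⁻¹ • (x₀ + d)) = (n:ℝ) • x₀ := congrArg _ hfix
  rw [smul_inv_smul₀ hn0] at h2
  exact h2.symm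

lemma digitset_finite (hD : ∀ d ∈ D, IsDigit n d) : D.Finite := by
  have hsub : D ⊆ Set.univ.pi (fun _ : Fin k => (fun m : ℕ => (m:ℝ)) '' Set.Iio n) := by
    intro d hd i _
    obtain ⟨m, hm, he⟩ := hD d hd i
    exact ⟨m, hm, he.symm⟩
  exact (Set.Finite.pi fun _ => (Set.finite_Iio n).image _).subset hsub

lemma Ak_finite : {β : Pt k | IsAk β}.Finite := by
  have hsub : {β : Pt k | IsAk β} ⊆
      Set.univ.pi (fun _ : Fin k => ({-1, 0, 1} : Set ℝ)) := by
    intro β hβ i _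
    rcases hβ i with h | h | h <;> simp [h]
  exact (Set.Finite.pi fun _ => (Set.finite_singleton _).insert _ |>.insert _).subset hsub

end Aux


section Aux2

variable {k n : ℕ} {D K : Set (Pt k)}

lemma mkGSucc {α β : Pt k} (hα : IsAk α) (hβ : IsAk β) (hlt : SqLt α β)
    (hFα : (interF K K α).Nonempty) (hFβ : (interF K K β).Nonempty)
    (hG : (Gab n D D α β).Nonempty) : GSucc n D D K K β α := by
  refine ⟨1, one_pos, fun j => if j = 0 then α else β, by simp, by simp, ?_, ?_, ?_, ?_⟩
  · intro j _
    by_cases h : j = 0 <;> simp [h, hα, hβ]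
  · intro j hj
    interval_cases j
    simpa using hlt
  · intro j _
    by_cases h : j = 0 <;> simp [h, hFα, hFβ]
  · intro j hj
    interval_cases j
    simpa using hG

lemma GSucc_extract {α γ : Pt k} (h : GSucc n D D K K γ α) :
    ∃ β, IsAk β ∧ SqLt α β ∧ (interF K K β).Nonempty ∧ (Gab n D D α β).Nonempty := by
  obtain ⟨p, hp, c, hc0, hcp, hAk, hlt, hFne, hGne⟩ := h
  refine ⟨c 1, hAk 1 hp, ?_, hFne 1 hp, ?_⟩
  · have := hlt 0 hp; rwa [hc0] at this
  · have := hGne 0 hp; rwa [hc0] at this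

/-- Number of zero coordinates. -/
def nz {k : ℕ} (α : Pt k) : ℕ := Set.ncard {i | α i = 0}

lemma nz_lt {α β : Pt k} (h : SqLt α β) : nz β < nz α := by
  apply Set.ncard_lt_ncard _ (Set.toFinite _)
  constructor
  · intro i hi
    simp only [Set.mem_setOf_eq] at hi ⊢
    by_contra hαi
    exact hαi (by rw [← h.1 i hαi, hi])
  · intro hsub
    obtain ⟨i, hi⟩ := Function.ne_iff.mp h.2
    have hαi : α i = 0 := by
      by_contra hc
      exact hi (h.1 i hc).symm
    have hβi : β i ≠ 0 := fun hc => hi (by rw [hc, hαi])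
    exact hβi (hsub hαi)

lemma ne_zero_of_sqlt {α β : Pt k} (hα : α ≠ 0) (h : SqLe α β) : β ≠ 0 := by
  obtain ⟨i, hi⟩ := Function.ne_iff.mp hα
  have : α i ≠ 0 := by simpa using hi
  intro hc
  exact this (by rw [← h i this, hc]; simp)

end Aux2


/-- a fractal cube `K` has the finite intersection property iff every
nonzero maximal vertex `α` of the structure graph has `#G_α = 1`, and every other
nonzero vertex `α` (with `F_α ≠ ∅`) has `G_α = ∅`. -/
theorem finite_intersection_iff {k n : ℕ} (hk : 1 ≤ k) (hn : 2 ≤ n)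
    (D K : Set (Pt k)) (hD : IsDigitSet n D) (hK : IsFractalCube n D K) :
    (∀ α : Pt k, IsAk α → α ≠ 0 → (interF K K α).Finite) ↔
    (∀ α : Pt k, IsAk α → α ≠ 0 → (interF K K α).Nonempty →
      ((¬∃ β, IsAk β ∧ GSucc n D D K K β α) → (Ga n D D α).ncard = 1) ∧
      ((∃ β, IsAk β ∧ GSucc n D D K K β α) → Ga n D D α = ∅)) := by
  have hEq := hK.2.2
  have hn0 : (n:ℝ) ≠ 0 := by positivity
  have hn1 : (2:ℝ) ≤ (n:ℝ) := by exact_mod_cast hn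
  have hsub := cube_subset_unit hn hD hK
  have hB : ∀ α : Pt k, ∀ x ∈ interF K K α, ∀ i, 0 ≤ x i ∧ x i ≤ 1 :=
    fun α x hx i => hsub (mem_interF.mp hx).1 i
  constructor
  · -- forward direction
    intro hfin α hα hne0 hFne
    have hF : (interF K K α).Finite := hfin α hα hne0
    constructor
    · -- maximal vertex : #G_α = 1
      intro hnosucc
      obtain ⟨x, hx⟩ := hFne
      obtain ⟨β, y, d, hβAk, hle, hyF, hdG, hxd⟩ := decomp hn hD hK hα hx
      have hβα : β = α := by
        by_contra hc
        exact hnosucc ⟨β, hβAk,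
          mkGSucc hα hβAk ⟨hle, fun h => hc h.symm⟩ ⟨x, hx⟩ ⟨y, hyF⟩ ⟨d, hdG⟩⟩
      subst hβα
      have hdGa : d ∈ Ga n D D β := hdG
      have hmaps : ∀ z ∈ interF K K β, Sdig n d z ∈ interF K K β :=
        fun z hz => Sdig_maps hn hEq hdGa hz
      obtain ⟨x₀, hsingle, hfix⟩ := invariant_singleton hn (hB β) hF ⟨x, hx⟩ hmaps
      have hx₀mem : x₀ ∈ interF K K β := by rw [hsingle]; rfl
      rw [Set.ncard_eq_one]
      refine ⟨d, Set.eq_singleton_iff_unique_mem.mpr ⟨hdGa, fun d' hd' => ?_⟩⟩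
      have h1 : Sdig n d' x₀ ∈ interF K K β := Sdig_maps hn hEq hd' hx₀mem
      rw [hsingle, Set.mem_singleton_iff] at h1
      have h2 : (n:ℝ) • ((n:ℝ)⁻¹ • (x₀ + d')) = (n:ℝ) • x₀ := congrArg _ h1
      rw [smul_inv_smul₀ hn0] at h2
      have h3 : x₀ + d' = x₀ + d := h2.trans hfix
      exact add_left_cancel h3
    · -- vertex with a successor : G_α = ∅
      intro hsucc
      by_contra hGne'
      obtain ⟨d, hd⟩ := Set.nonempty_iff_ne_empty.mpr hGne'
      have hdGa : d ∈ Gab n D D α α := hd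
      have hmaps : ∀ z ∈ interF K K α, Sdig n d z ∈ interF K K α :=
        fun z hz => Sdig_maps hn hEq hdGa hz
      obtain ⟨x₀, hsingle, hfix⟩ := invariant_singleton hn (hB α) hF hFne hmaps
      have hx₀mem : x₀ ∈ interF K K α := by rw [hsingle]; rfl
      obtain ⟨γ, hγAk, hγ⟩ := hsucc
      obtain ⟨α₁, hα₁Ak, hlt, hF1ne, hG1ne⟩ := GSucc_extract hγ
      obtain ⟨z, hz⟩ := hF1ne
      obtain ⟨d₀, hd₀⟩ := hG1ne
      have hSz : Sdig n d₀ z ∈ interF K K α := Sdig_maps hn hEq hd₀ hz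
      rw [hsingle, Set.mem_singleton_iff] at hSz
      have hzd : z + d₀ = (n:ℝ) • x₀ := by
        have h2 : (n:ℝ) • ((n:ℝ)⁻¹ • (z + d₀)) = (n:ℝ) • x₀ := congrArg _ hSz
        rwa [smul_inv_smul₀ hn0] at h2
      -- pick a coordinate where α is 0 and α₁ isn't
      obtain ⟨i, hi⟩ := Function.ne_iff.mp hlt.2
      have hαi : α i = 0 := by
        by_contra hc
        exact hi (hlt.1 i hc).symm
      have hα₁i : α₁ i ≠ 0 := by
        intro hc
        exact hi (by rw [hαi, hc])
      -- coordinate equations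
      obtain ⟨hzK, w, hwK, hwz⟩ := mem_interF.mp hz
      have hz1 := hsub hzK i
      have hw1 := hsub hwK i
      have hwzi : w i + α₁ i = z i := by have := congrFun hwz i; simpa using this
      have hfixi : (n:ℝ) * x₀ i = x₀ i + d i := by
        have := congrFun hfix i; simpa using this
      have hzdi : z i + d₀ i = (n:ℝ) * x₀ i := by
        have := congrFun hzd i; simpa using this
      have hx₀b := hB α x₀ hx₀mem i
      -- digits
      obtain ⟨hdD, -⟩ := mem_Gab.mp hdGa
      obtain ⟨hd₀D, e, heD, hede⟩ := mem_Gab.mp hd₀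
      obtain ⟨m, hm, hmc⟩ := hD.2 d hdD i
      obtain ⟨m₀, hm₀, hm₀c⟩ := hD.2 d₀ hd₀D i
      obtain ⟨me, hme, hmec⟩ := hD.2 e heD i
      have hmr : (m:ℝ) + 1 ≤ (n:ℝ) := by exact_mod_cast hm
      have hm₀r : (m₀:ℝ) + 1 ≤ (n:ℝ) := by exact_mod_cast hm₀
      have hmer : (me:ℝ) + 1 ≤ (n:ℝ) := by exact_mod_cast hme
      have hm0 : (0:ℝ) ≤ (m:ℝ) := by positivity
      have hm₀0 : (0:ℝ) ≤ (m₀:ℝ) := by positivity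
      have hme0 : (0:ℝ) ≤ (me:ℝ) := by positivity
      have hedi : e i + ((n:ℝ) * α i - α₁ i) = d₀ i := by
        have := congrFun hede i; simpa using this
      rw [hαi] at hedi
      -- case on the sign of α₁ i
      rcases hα₁Ak i with hσ | hσ | hσ
      · -- α₁ i = -1 : z i = 0
        have hz_i : z i = 0 := by
          rw [hσ] at hwzi
          linarith [hz1.1, hw1.2]
        rw [hσ, hmec, hm₀c] at hedi
        rw [hz_i, hm₀c] at hzdi
        rw [hmc] at hfixi
        have e1 : (me:ℝ) + 1 = (m₀:ℝ) := by linarith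
        have e2 : (m₀:ℝ) = (n:ℝ) * x₀ i := by linarith
        have e3 : x₀ i = (m₀:ℝ) - (m:ℝ) := by linarith
        have hlt1 : x₀ i < 1 := by
          have hxq : x₀ i = (m₀:ℝ) / (n:ℝ) := by field_simp; linarith
          rw [hxq, div_lt_one (by positivity)]
          linarith
        have c1 : m ≤ m₀ := by exact_mod_cast (by linarith [hx₀b.1] : (m:ℝ) ≤ (m₀:ℝ))
        have c2 : m₀ < m + 1 := by
          exact_mod_cast (show (m₀:ℝ) < (m:ℝ) + 1 by linarith)
        have hmm : m₀ = m := by omega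
        have hx0 : x₀ i = 0 := by rw [e3, hmm]; ring
        rw [hx0] at e2
        linarith
      · exact hα₁i hσ
      · -- α₁ i = 1 : z i = 1
        have hz_i : z i = 1 := by
          rw [hσ] at hwzi
          linarith [hz1.2, hw1.1]
        rw [hσ, hmec, hm₀c] at hedi
        rw [hz_i, hm₀c] at hzdi
        rw [hmc] at hfixi
        have e1 : (me:ℝ) - 1 = (m₀:ℝ) := by linarith
        have e2 : (me:ℝ) = (n:ℝ) * x₀ i := by linarith
        have e3 : x₀ i = (me:ℝ) - (m:ℝ) := by linarith
        have hlt1 : x₀ i < 1 := by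
          have hxq : x₀ i = (me:ℝ) / (n:ℝ) := by field_simp; linarith
          rw [hxq, div_lt_one (by positivity)]
          linarith
        have c1 : m ≤ me := by exact_mod_cast (by linarith [hx₀b.1] : (m:ℝ) ≤ (me:ℝ))
        have c2 : me < m + 1 := by
          exact_mod_cast (show (me:ℝ) < (m:ℝ) + 1 by linarith)
        have hmm : me = m := by omega
        have hx0 : x₀ i = 0 := by rw [e3, hmm]; ring
        rw [hx0] at e2
        linarith
  · -- converse direction
    intro hRHS
    have main : ∀ s : ℕ, ∀ α : Pt k, IsAk α → α ≠ 0 → nz α = s → (interF K K α).Finite := by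
      intro s
      induction s using Nat.strong_induction_on with
      | _ s ih =>
        intro α hα hne0 hnz
        rcases Set.eq_empty_or_nonempty (interF K K α) with hemp | hFne
        · rw [hemp]; exact Set.finite_empty
        by_cases hsucc : ∃ β, IsAk β ∧ GSucc n D D K K β α
        · -- G_α = ∅ : contained in scaled union over strictly bigger vertices
          have hGa : Ga n D D α = ∅ := (hRHS α hα hne0 hFne).2 hsucc
          have hBfin : {β : Pt k | IsAk β ∧ SqLt α β}.Finite :=
            Ak_finite.subset fun β hβ => hβ.1
          have hEfin : (⋃ β ∈ {β : Pt k | IsAk β ∧ SqLt α β}, interF K K β).Finite := by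
            apply hBfin.biUnion
            intro β hβ
            exact ih (nz β) (hnz ▸ nz_lt hβ.2) β hβ.1 (ne_zero_of_sqlt hne0 hβ.2.1) rfl
          have hDfin : D.Finite := digitset_finite hD.2
          have hTfin : ((fun q : Pt k × Pt k => (n:ℝ)⁻¹ • (q.1 + q.2)) ''
              ((⋃ β ∈ {β : Pt k | IsAk β ∧ SqLt α β}, interF K K β) ×ˢ D)).Finite :=
            (hEfin.prod hDfin).image _
          apply hTfin.subset
          intro x hx
          obtain ⟨β, y, d, hβAk, hle, hyF, hdG, hxd⟩ := decomp hn hD hK hα hx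
          have hβα : β ≠ α := by
            rintro rfl
            have : d ∈ Ga n D D β := hdG
            rw [hGa] at this
            exact Set.notMem_empty d this
          refine ⟨(y, d), ⟨Set.mem_biUnion ⟨hβAk, hle, fun h => hβα h.symm⟩ hyF, hdG.1⟩, ?_⟩
          show (n:ℝ)⁻¹ • (y + d) = x
          rw [← hxd, inv_smul_smul₀ hn0]
        · -- #G_α = 1 : contraction gives subsingleton
          have hGa : (Ga n D D α).ncard = 1 := (hRHS α hα hne0 hFne).1 hsucc
          obtain ⟨d₀, hd₀⟩ := Set.ncard_eq_one.mp hGa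
          have hcon : ∀ x ∈ interF K K α, ∃ u ∈ interF K K α, (n:ℝ) • x = u + d₀ := by
            intro x hx
            obtain ⟨β, y, d, hβAk, hle, hyF, hdG, hxd⟩ := decomp hn hD hK hα hx
            have hβα : β = α := by
              by_contra hc
              exact hsucc ⟨β, hβAk,
                mkGSucc hα hβAk ⟨hle, fun h => hc h.symm⟩ hFne ⟨y, hyF⟩ ⟨d, hdG⟩⟩
            subst hβα
            have hdGa : d ∈ Ga n D D β := hdG
            rw [hd₀, Set.mem_singleton_iff] at hdGa
            subst hdGa
            exact ⟨y, hyF, hxd⟩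
          exact (subsingleton_of_contract hn (hB α) hcon).finite
    intro α hα hne0
    exact main (nz α) α hα hne0 rfl
end
end
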